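/- arXiv:1611.08419 — 3 statements merged into one kernel-verified Lean document; each statement's English description precedes it below -/
import Mathlib

section
/- Fix an Alice strategy, let B be a random infinite cycle, and suppose that at time n+1 Alice plays a c-move (i.e. ν_A(n+1) is a common edge of A_n and B_n). Then, conditioned on B_n (on Bob's choices up to time n): P(S_{n+1}=S_n−2 and T_{n+1}=T_n+1) = S*_n/n; P(S_{n+1}=S_n−1 and T_{n+1}=T_n+1) ≤ 2/n; P(S_{n+1}=S_n−1 and T_{n+1}=T_n) = R_n/n; P(S_{n+1}=S_n and T_{n+1}=T_n) ≤ 2/n; P(S_{n+1}=S_n+1 and T_{n+1}=T_n) = 1/n; and all other pairs of increments (ΔS, ΔT) with ΔS ∈ {−2,−1,0,+1}, ΔT ∈ {−1,0,+1} have conditional probability 0. -/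
open MeasureTheory

/-- An infinite cycle: coordinate `i` represents the choice `c_{i+3} ∈ {1,…,i+3}`
(encoded as `Fin (i+3)`, with value `v` representing `v+1`). -/
abbrev InfCycle := ∀ i : ℕ, Fin (i + 3)

/-- The list of nodes of the cycle `A_n`, in positive direction starting at node 1.
`A_{n+1}` arises from `A_n` by inserting node `n+1` into the `c_n`-th edge. -/
def listOf (c : InfCycle) : ℕ → List ℕ
  | 0 => []
  | 1 => []
  | 2 => []
  | 3 => [1, 2, 3]
  | (n + 4) => (listOf c (n + 3)).insertIdx ((c n).val + 1) (n + 4)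

/-- The node following `x` in the cyclic order given by the list `l`. -/
def cyclicNext (l : List ℕ) (x : ℕ) : ℕ := (l.rotate 1).getD (l.idxOf x) 0

/-- The node preceding `x` in the cyclic order given by the list `l`. -/
def cyclicPrev (l : List ℕ) (x : ℕ) : ℕ := (l.rotate (l.length - 1)).getD (l.idxOf x) 0

/-- `ν⁺_A(k)`: the neighbor of `k` in `A_k` in positive direction. -/
def nuPlus (c : InfCycle) (k : ℕ) : ℕ :=
  if k ≤ 1 then 0 else if k = 2 then 1 else cyclicNext (listOf c k) k

/-- `ν⁻_A(k)`: the neighbor of `k` in `A_k` in negative direction. -/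
def nuMinus (c : InfCycle) (k : ℕ) : ℕ :=
  if k ≤ 1 then 0 else if k = 2 then 1 else cyclicPrev (listOf c k) k

/-- `ν_A(k) = {ν⁺_A(k), ν⁻_A(k)}`, the edge of `A_{k-1}` into which `k` was inserted. -/
def nuSet (c : InfCycle) (k : ℕ) : Finset ℕ := {nuPlus c k, nuMinus c k}

/-- The edges (as unordered pairs) of the cycle whose nodes, in cyclic order, are `l`. -/
def edgeList (l : List ℕ) : List (Finset ℕ) :=
  l.zipWith (fun x y => ({x, y} : Finset ℕ)) (l.rotate 1)

/-- `E(A_n)`: the edge set of the cycle `A_n`. -/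
def cycleEdges (c : InfCycle) (n : ℕ) : Finset (Finset ℕ) := (edgeList (listOf c n)).toFinset

/-- `k` is a vertex of the pedigree graph `G_n^{AB}`. -/
def isVertex (a b : InfCycle) (n k : ℕ) : Prop := 4 ≤ k ∧ k ≤ n ∧ nuSet a k ≠ nuSet b k

/-- The condition for an edge of the pedigree graph between vertices `k < m`
(type-1 A→B, type-1 B→A, type-2 A→B, type-2 B→A). -/
def edgeCond (a b : InfCycle) (k m : ℕ) : Prop :=
  nuSet a m = nuSet b k ∨ nuSet b m = nuSet a k ∨
  (k = max (nuPlus a m) (nuMinus a m) ∧ nuSet b k ∩ nuSet a m = ∅) ∨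
  (k = max (nuPlus b m) (nuMinus b m) ∧ nuSet a k ∩ nuSet b m = ∅)

/-- The pedigree graph `G_n^{AB}`, as a graph on `ℕ` (non-vertices are isolated). -/
def pedigreeGraph (a b : InfCycle) (n : ℕ) : SimpleGraph ℕ where
  Adj k m := isVertex a b n k ∧ isVertex a b n m ∧
    ((k < m ∧ edgeCond a b k m) ∨ (m < k ∧ edgeCond a b m k))
  symm := ⟨fun k m ⟨h1, h2, h3⟩ => ⟨h2, h1, h3.symm⟩⟩
  loopless := ⟨fun k h => by rcases h.2.2 with ⟨h', _⟩ | ⟨h', _⟩ <;> exact absurd h' (lt_irrefl k)⟩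

/-- The vertex set of the pedigree graph `G_n^{AB}`. -/
def vertexSet (a b : InfCycle) (n : ℕ) : Set ℕ := {k | isVertex a b n k}

/-- The pedigree graph `G_n^{AB}` on its vertex set. -/
def pGraph (a b : InfCycle) (n : ℕ) : SimpleGraph (vertexSet a b n) :=
  (pedigreeGraph a b n).induce (vertexSet a b n)

/-- The pedigree graph `G_n^{AB}` is connected. -/
def pConnected (a b : InfCycle) (n : ℕ) : Prop := (pGraph a b n).Connected

/-- `T_n`: the number of connected components of the pedigree graph `G_n^{AB}`. -/
noncomputable def Tnum (a b : InfCycle) (n : ℕ) : ℕ :=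
  Nat.card (pGraph a b n).ConnectedComponent

/-- `I_n`: at time `n`, the node `n` is added to the pedigree graph as an isolated vertex. -/
def isolatedAt (a b : InfCycle) (n : ℕ) : Prop :=
  isVertex a b n n ∧ ∀ k, ¬ (pedigreeGraph a b n).Adj n k

/-- The event that the first `m` coordinates (`c_3, …, c_{m+2}`) agree with those of `b₀`. -/
def prefixEvent (b₀ : InfCycle) (m : ℕ) : Set InfCycle := {b | ∀ j, j < m → b j = b₀ j}

/-- `μ` is the distribution of a random infinite cycle: the product over `n ≥ 3` of the
uniform measures on `{1,…,n}`.  (This property determines `μ` uniquely.) -/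
def IsCycleMeasure (μ : Measure InfCycle) : Prop :=
  IsProbabilityMeasure μ ∧
    ∀ (b₀ : InfCycle) (m : ℕ),
      μ (prefixEvent b₀ m) = ∏ j ∈ Finset.range m, ((j + 3 : ℕ) : ENNReal)⁻¹

/-- An Alice strategy: her choice at each time depends only on Bob's earlier choices. -/
structure AliceStrategy where
  play : InfCycle → InfCycle
  adapted : ∀ (b b' : InfCycle) (i : ℕ), (∀ j, j < i → b j = b' j) → play b i = play b' i

/-- `S_n = |E(A_n) ∩ E(B_n)|`. -/
def Sval (a b : InfCycle) (n : ℕ) : ℕ := (cycleEdges a n ∩ cycleEdges b n).card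

/-- `S*_n`: the number of common edges not incident on `ν_A(n+1)`. -/
def Sstar (a b : InfCycle) (n : ℕ) : ℕ :=
  ((cycleEdges a n ∩ cycleEdges b n).filter (fun e => e ∩ nuSet a (n + 1) = ∅)).card

/-- `R_n`: the number of edges of `B_n` that are not common and not incident on `ν_A(n+1)`. -/
def Rval (a b : InfCycle) (n : ℕ) : ℕ :=
  ((cycleEdges b n \ cycleEdges a n).filter (fun e => e ∩ nuSet a (n + 1) = ∅)).card

/-- Alice's move at time `m` is a d-move: `ν_A(m) ∉ E^∩_{m-1}`. -/
def dMoveAt (a b : InfCycle) (m : ℕ) : Prop := nuSet a m ∉ cycleEdges b (m - 1)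

/-- `Y`: the total number of times an isolated vertex is created in the pedigree graph. -/
noncomputable def Yval (a b : InfCycle) : ENNReal :=
  ∑' m : ℕ, Set.indicator {x : ℕ | isolatedAt a b x} (fun _ => 1) m

/-- The conditional probability, given Bob's choices up to time `n` (i.e. given `B_n`,
determined by the prefix `b₀` of length `n - 3`), that `S_{n+1} = S_n + ds` and
`T_{n+1} = T_n + dt`. -/
noncomputable def condP (μ : Measure InfCycle) (σ : AliceStrategy) (b₀ : InfCycle)
    (n : ℕ) (ds dt : ℤ) : ENNReal :=
  ProbabilityTheory.cond μ (prefixEvent b₀ (n - 3))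
    {b : InfCycle |
      (Sval (σ.play b) b (n + 1) : ℤ) = (Sval (σ.play b₀) b₀ n : ℤ) + ds ∧
      (Tnum (σ.play b) b (n + 1) : ℤ) = (Tnum (σ.play b₀) b₀ n : ℤ) + dt}

namespace PedAux
open List Finset

/-! ### Basic list facts -/

lemma pair_eq_iff {a b c d : ℕ} :
    ({a, b} : Finset ℕ) = {c, d} ↔ (a = c ∧ b = d) ∨ (a = d ∧ b = c) := by
  constructor
  · intro h
    have ha : a = c ∨ a = d := by
      have : a ∈ ({c, d} : Finset ℕ) := h ▸ (Finset.mem_insert_self a {b})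
      simpa using this
    have hb : b = c ∨ b = d := by
      have : b ∈ ({c, d} : Finset ℕ) := by
        rw [← h]; simp
      simpa using this
    have hc : c = a ∨ c = b := by
      have : c ∈ ({a, b} : Finset ℕ) := h ▸ (Finset.mem_insert_self c {d})
      simpa using this
    have hd : d = a ∨ d = b := by
      have : d ∈ ({a, b} : Finset ℕ) := by
        rw [h]; simp
      simpa using this
    omega
  · rintro (⟨rfl, rfl⟩ | ⟨rfl, rfl⟩)
    · rfl
    · exact Finset.pair_comm a b

lemma mem_pair_iff {a b x : ℕ} : x ∈ ({a, b} : Finset ℕ) ↔ x = a ∨ x = b := by simp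

lemma listOf_three (c : InfCycle) : listOf c 3 = [1, 2, 3] := rfl

lemma listOf_succ (c : InfCycle) (k : ℕ) :
    listOf c (k + 4) = (listOf c (k + 3)).insertIdx ((c k).val + 1) (k + 4) := rfl

lemma length_listOf (c : InfCycle) : ∀ k, (listOf c (k + 3)).length = k + 3
  | 0 => rfl
  | (k + 1) => by
    rw [show k + 1 + 3 = k + 4 from rfl, listOf_succ,
      List.length_insertIdx_of_le_length (by rw [length_listOf c k]; omega), length_listOf c k]

lemma mem_listOf (c : InfCycle) : ∀ k, ∀ x, x ∈ listOf c (k + 3) ↔ 1 ≤ x ∧ x ≤ k + 3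
  | 0, x => by rw [listOf_three]; simp; omega
  | (k + 1), x => by
    rw [show k + 1 + 3 = k + 4 from rfl, listOf_succ,
      List.mem_insertIdx (by rw [length_listOf c k]; omega)]
    rw [mem_listOf c k x]
    omega

lemma nodup_listOf (c : InfCycle) : ∀ k, (listOf c (k + 3)).Nodup
  | 0 => by rw [listOf_three]; simp
  | (k + 1) => by
    rw [show k + 1 + 3 = k + 4 from rfl, listOf_succ]
    have hp := List.perm_insertIdx (k + 4) (listOf c (k + 3))
      (i := (c k).val + 1) (by rw [length_listOf c k]; omega)
    rw [hp.nodup_iff, List.nodup_cons]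
    exact ⟨by rw [mem_listOf c k]; omega, nodup_listOf c k⟩

lemma succ_not_mem_listOf (c : InfCycle) (k : ℕ) : (k + 4) ∉ listOf c (k + 3) := by
  rw [mem_listOf c k]; omega

/-! ### edgeList facts -/

lemma edgeList_length (l : List ℕ) : (edgeList l).length = l.length := by
  simp [edgeList]

lemma edgeList_getElem (l : List ℕ) (j : ℕ) (hj : j < l.length) :
    (edgeList l)[j]'(by rw [edgeList_length]; exact hj) =
      {l[j], l[(j + 1) % l.length]'(Nat.mod_lt _ (by omega))} := by
  simp only [edgeList, List.getElem_zipWith, List.getElem_rotate]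

lemma mem_edgeList_iff {l : List ℕ} {g : Finset ℕ} :
    g ∈ edgeList l ↔ ∃ j, ∃ hj : j < l.length,
      g = {l[j], l[(j + 1) % l.length]'(Nat.mod_lt _ (by omega))} := by
  rw [List.mem_iff_getElem]
  constructor
  · rintro ⟨j, hj, rfl⟩
    have hj' : j < l.length := by rwa [edgeList_length] at hj
    exact ⟨j, hj', edgeList_getElem l j hj'⟩
  · rintro ⟨j, hj, rfl⟩
    exact ⟨j, by rwa [edgeList_length], edgeList_getElem l j hj⟩

lemma edge_elems_mem {l : List ℕ} {g : Finset ℕ} (hg : g ∈ edgeList l) :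
    ∀ x ∈ g, x ∈ l := by
  rw [mem_edgeList_iff] at hg
  obtain ⟨j, hj, rfl⟩ := hg
  intro x hx
  rcases mem_pair_iff.1 hx with rfl | rfl
  · exact List.getElem_mem _
  · exact List.getElem_mem _

lemma edgeList_nodup {l : List ℕ} (hl : l.Nodup) (h3 : 3 ≤ l.length) :
    (edgeList l).Nodup := by
  rw [List.nodup_iff_injective_get]
  rintro ⟨j, hj⟩ ⟨k, hk⟩ h
  simp only [List.get_eq_getElem] at h
  rw [edgeList_length] at hj hk
  rw [edgeList_getElem l j hj, edgeList_getElem l k hk] at h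
  rcases pair_eq_iff.1 h with ⟨h1, h2⟩ | ⟨h1, h2⟩
  · exact Fin.ext ((hl.getElem_inj_iff).1 h1)
  · have e1 := (hl.getElem_inj_iff).1 h1
    have e2 := (hl.getElem_inj_iff).1 h2
    exfalso
    rcases Nat.lt_or_ge (k + 1) l.length with hk1 | hk1
    · rw [Nat.mod_eq_of_lt hk1] at e1
      subst e1
      rcases Nat.lt_or_ge (k + 2) l.length with hk2 | hk2
      · rw [Nat.mod_eq_of_lt hk2] at e2; omega
      · have hlen : l.length = k + 2 := by omega
        rw [hlen, Nat.mod_self] at e2; omega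
    · have hlen : l.length = k + 1 := by omega
      rw [hlen, Nat.mod_self] at e1
      subst e1
      rw [Nat.mod_eq_of_lt (by omega)] at e2
      omega

end PedAux
namespace PedAux
open List Finset

/-! ### insertIdx and edges -/

lemma getElem_insertIdx_cases {α : Type} (l : List α) (x : α) (p j : ℕ)
    (hp : p ≤ l.length) (hj : j < l.length + 1) :
    (l.insertIdx p x)[j]'(by rw [List.length_insertIdx_of_le_length hp]; omega) =
      if h : j < p then l[j]'(by omega)
      else if h2 : j = p then x
      else l[j - 1]'(by omega) := by
  split_ifs with h h2
  · exact List.getElem_insertIdx_of_lt h (by rw [List.length_insertIdx_of_le_length hp]; omega)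
  · subst h2; exact List.getElem_insertIdx_self (by rw [List.length_insertIdx_of_le_length hp]; omega)
  · obtain ⟨k', rfl⟩ : ∃ k', j = p + k' + 1 := ⟨j - p - 1, by omega⟩
    exact List.getElem_insertIdx_add_succ l x p k' (by omega)

lemma indexOf_insertIdx_self : ∀ (l : List ℕ) (m j : ℕ), m ∉ l → j ≤ l.length →
    (l.insertIdx j m).idxOf m = j
  | l, m, 0, _, _ => by simp
  | [], m, (j+1), hm, hj => by simp at hj
  | (x :: t), m, (j+1), hm, hj => by
    rw [List.insertIdx_succ_cons, List.idxOf_cons_ne _ (by simp at hm; tauto),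
      indexOf_insertIdx_self t m j (by simp at hm; tauto) (by simpa using hj)]

lemma getElem_congr' {α : Type} {l : List α} {i j : ℕ} (h : i = j) {hi : i < l.length} :
    l[i]'hi = l[j]'(h ▸ hi) := by subst h; rfl

section InsertEdge

variable {l : List ℕ} {m i : ℕ}

lemma cyclicPrev_insertIdx (hm : m ∉ l) (hi : i < l.length) (h3 : 3 ≤ l.length) :
    cyclicPrev (l.insertIdx (i + 1) m) m = l[i] := by
  have hlen : (l.insertIdx (i + 1) m).length = l.length + 1 :=
    List.length_insertIdx_of_le_length (by omega) _
  have hidx : (l.insertIdx (i + 1) m).idxOf m = i + 1 :=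
    indexOf_insertIdx_self l m (i + 1) hm (by omega)
  rw [cyclicPrev, hidx, hlen]
  rw [List.getD_eq_getElem _ _ (by rw [List.length_rotate, hlen]; omega)]
  rw [List.getElem_rotate]
  have : (i + 1 + (l.length + 1 - 1)) % (l.insertIdx (i + 1) m).length = i := by
    rw [hlen]
    have : i + 1 + (l.length + 1 - 1) = (l.length + 1) + i := by omega
    rw [this, Nat.add_mod_left, Nat.mod_eq_of_lt (by omega)]
  rw [getElem_congr' this]
  rw [getElem_insertIdx_cases l m (i + 1) i (by omega) (by omega)]
  simp [Nat.lt_succ_self]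

lemma cyclicNext_insertIdx (hm : m ∉ l) (hi : i < l.length) (h3 : 3 ≤ l.length) :
    cyclicNext (l.insertIdx (i + 1) m) m = l[(i + 1) % l.length]'(Nat.mod_lt _ (by omega)) := by
  have hlen : (l.insertIdx (i + 1) m).length = l.length + 1 :=
    List.length_insertIdx_of_le_length (by omega) _
  have hidx : (l.insertIdx (i + 1) m).idxOf m = i + 1 :=
    indexOf_insertIdx_self l m (i + 1) hm (by omega)
  rw [cyclicNext, hidx]
  rw [List.getD_eq_getElem _ _ (by rw [List.length_rotate, hlen]; omega)]
  rw [List.getElem_rotate]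
  rcases Nat.lt_or_ge (i + 1) l.length with h | h
  · have e1 : (i + 1 + 1) % (l.insertIdx (i + 1) m).length = i + 2 := by
      rw [hlen, Nat.mod_eq_of_lt (by omega)]
    have e2 : (i + 1) % l.length = i + 1 := Nat.mod_eq_of_lt h
    rw [getElem_congr' e1,
      getElem_insertIdx_cases l m (i + 1) (i + 2) (by omega) (by omega),
      dif_neg (by omega), dif_neg (by omega),
      getElem_congr' (by omega : i + 2 - 1 = (i + 1) % l.length)]
  · have hli : l.length = i + 1 := by omega
    have e1 : (i + 1 + 1) % (l.insertIdx (i + 1) m).length = 0 := by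
      rw [hlen, hli, Nat.mod_self]
    have e2 : (i + 1) % l.length = 0 := by rw [hli, Nat.mod_self]
    rw [getElem_congr' e1,
      getElem_insertIdx_cases l m (i + 1) 0 (by omega) (by omega),
      dif_pos (by omega), getElem_congr' e2]

end InsertEdge

end PedAux
namespace PedAux
open List Finset

section InsertEdge2

variable {l : List ℕ} {m i : ℕ}

private lemma len' (hm : m ∉ l) (hi : i < l.length) :
    (l.insertIdx (i + 1) m).length = l.length + 1 :=
  List.length_insertIdx_of_le_length (by omega) _

lemma edge_ins_lt (hm : m ∉ l) (hi : i < l.length) (h3 : 3 ≤ l.length)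
    (j : ℕ) (hj : j < i) :
    (edgeList (l.insertIdx (i + 1) m))[j]'(by
      rw [edgeList_length, len' hm hi]; omega) =
    (edgeList l)[j]'(by rw [edgeList_length]; omega) := by
  rw [edgeList_getElem _ j (by rw [len' hm hi]; omega),
    edgeList_getElem l j (by omega)]
  rw [getElem_congr' (by rw [len' hm hi]; rw [Nat.mod_eq_of_lt (by omega)] :
    (j + 1) % (l.insertIdx (i + 1) m).length = j + 1)]
  rw [getElem_insertIdx_cases l m (i + 1) j (by omega) (by omega), dif_pos (by omega)]
  rw [getElem_insertIdx_cases l m (i + 1) (j + 1) (by omega) (by omega), dif_pos (by omega)]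
  rw [getElem_congr' (Nat.mod_eq_of_lt (by omega) : (j + 1) % l.length = j + 1)]

lemma edge_ins_self (hm : m ∉ l) (hi : i < l.length) (h3 : 3 ≤ l.length) :
    (edgeList (l.insertIdx (i + 1) m))[i]'(by
      rw [edgeList_length, len' hm hi]; omega) = {l[i], m} := by
  rw [edgeList_getElem _ i (by rw [len' hm hi]; omega)]
  rw [getElem_congr' (by rw [len' hm hi]; rw [Nat.mod_eq_of_lt (by omega)] :
    (i + 1) % (l.insertIdx (i + 1) m).length = i + 1)]
  rw [getElem_insertIdx_cases l m (i + 1) i (by omega) (by omega), dif_pos (by omega)]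
  rw [getElem_insertIdx_cases l m (i + 1) (i + 1) (by omega) (by omega), dif_neg (by omega),
    dif_pos rfl]

lemma edge_ins_succ (hm : m ∉ l) (hi : i < l.length) (h3 : 3 ≤ l.length) :
    (edgeList (l.insertIdx (i + 1) m))[i + 1]'(by
      rw [edgeList_length, len' hm hi]; omega) =
    {m, l[(i + 1) % l.length]'(Nat.mod_lt _ (by omega))} := by
  rw [edgeList_getElem _ (i + 1) (by rw [len' hm hi]; omega)]
  rw [getElem_insertIdx_cases l m (i + 1) (i + 1) (by omega) (by omega), dif_neg (by omega),
    dif_pos rfl]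
  congr 1
  rcases Nat.lt_or_ge (i + 1) l.length with h | h
  · have e2 : (i + 1) % l.length = i + 1 := Nat.mod_eq_of_lt (by omega)
    rw [getElem_congr' (by rw [len' hm hi]; rw [Nat.mod_eq_of_lt (by omega)] :
      (i + 1 + 1) % (l.insertIdx (i + 1) m).length = i + 2)]
    rw [getElem_insertIdx_cases l m (i + 1) (i + 2) (by omega) (by omega),
      dif_neg (by omega), dif_neg (by omega),
      getElem_congr' (by omega : i + 2 - 1 = (i + 1) % l.length)]
  · have hli : l.length = i + 1 := by omega
    have e2 : (i + 1) % l.length = 0 := by rw [hli, Nat.mod_self]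
    rw [getElem_congr' (by rw [len' hm hi, hli, Nat.mod_self] :
      (i + 1 + 1) % (l.insertIdx (i + 1) m).length = 0)]
    rw [getElem_insertIdx_cases l m (i + 1) 0 (by omega) (by omega),
      dif_pos (by omega), getElem_congr' e2]

lemma edge_ins_gt (hm : m ∉ l) (hi : i < l.length) (h3 : 3 ≤ l.length)
    (j : ℕ) (hj1 : i + 1 < j) (hj : j < l.length + 1) :
    (edgeList (l.insertIdx (i + 1) m))[j]'(by
      rw [edgeList_length, len' hm hi]; omega) =
    (edgeList l)[j - 1]'(by rw [edgeList_length]; omega) := by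
  rw [edgeList_getElem _ j (by rw [len' hm hi]; omega),
    edgeList_getElem l (j - 1) (by omega)]
  rw [getElem_insertIdx_cases l m (i + 1) j (by omega) (by omega), dif_neg (by omega),
    dif_neg (by omega)]
  congr 1
  rcases Nat.lt_or_ge j l.length with h | h
  · rw [getElem_congr' (by rw [len' hm hi]; rw [Nat.mod_eq_of_lt (by omega)] :
      (j + 1) % (l.insertIdx (i + 1) m).length = j + 1)]
    rw [getElem_insertIdx_cases l m (i + 1) (j + 1) (by omega) (by omega),
      dif_neg (by omega), dif_neg (by omega),
      getElem_congr' (by rw [Nat.mod_eq_of_lt (by omega)]; omega : j + 1 - 1 = (j - 1 + 1) % l.length)]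
  · have hlj : j = l.length := by omega
    rw [getElem_congr' (by rw [len' hm hi, hlj, Nat.mod_self] :
      (j + 1) % (l.insertIdx (i + 1) m).length = 0)]
    rw [getElem_insertIdx_cases l m (i + 1) 0 (by omega) (by omega), dif_pos (by omega)]
    rw [getElem_congr' (by rw [hlj]; rw [Nat.sub_add_cancel (by omega), Nat.mod_self] :
      (0 : ℕ) = (j - 1 + 1) % l.length)]

lemma mem_edgeList_insertIdx (hm : m ∉ l) (hi : i < l.length) (h3 : 3 ≤ l.length)
    (hnd : l.Nodup) {g : Finset ℕ} :
    g ∈ edgeList (l.insertIdx (i + 1) m) ↔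
      g = {l[i], m} ∨ g = {m, l[(i + 1) % l.length]'(Nat.mod_lt _ (by omega))} ∨
      (g ∈ edgeList l ∧ g ≠ {l[i], l[(i + 1) % l.length]'(Nat.mod_lt _ (by omega))}) := by
  have hnd' : (edgeList l).Nodup := edgeList_nodup hnd h3
  have hEi : (edgeList l)[i]'(by rw [edgeList_length]; omega) =
      {l[i], l[(i + 1) % l.length]'(Nat.mod_lt _ (by omega))} := edgeList_getElem l i (by omega)
  have getne : ∀ (t : ℕ) (ht : t < l.length), t ≠ i →
      (edgeList l)[t]'(by rw [edgeList_length]; omega) ≠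
      {l[i], l[(i + 1) % l.length]'(Nat.mod_lt _ (by omega))} := by
    intro t ht htne hcon
    rw [← hEi] at hcon
    exact htne ((hnd'.getElem_inj_iff).1 hcon)
  constructor
  · intro hg
    rw [List.mem_iff_getElem] at hg
    obtain ⟨j, hj, rfl⟩ := hg
    rw [edgeList_length, len' hm hi] at hj
    rcases Nat.lt_or_ge j i with h | h
    · refine Or.inr (Or.inr ⟨?_, ?_⟩)
      · rw [edge_ins_lt hm hi h3 j h]; exact List.getElem_mem _
      · rw [edge_ins_lt hm hi h3 j h]; exact getne j (by omega) (by omega)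
    rcases Nat.eq_or_lt_of_le h with rfl | h2
    · exact Or.inl (edge_ins_self hm hi h3)
    rcases Nat.eq_or_lt_of_le h2 with rfl | h4
    · exact Or.inr (Or.inl (edge_ins_succ hm hi h3))
    · refine Or.inr (Or.inr ⟨?_, ?_⟩)
      · rw [edge_ins_gt hm hi h3 j h4 hj]; exact List.getElem_mem _
      · rw [edge_ins_gt hm hi h3 j h4 hj]; exact getne (j - 1) (by omega) (by omega)
  · rintro (rfl | rfl | ⟨hg, hne⟩)
    · rw [List.mem_iff_getElem]
      exact ⟨i, by rw [edgeList_length, len' hm hi]; omega, edge_ins_self hm hi h3⟩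
    · rw [List.mem_iff_getElem]
      exact ⟨i + 1, by rw [edgeList_length, len' hm hi]; omega, edge_ins_succ hm hi h3⟩
    · rw [List.mem_iff_getElem] at hg
      obtain ⟨t, ht, rfl⟩ := hg
      rw [edgeList_length] at ht
      have htne : t ≠ i := by
        intro hcon; subst hcon; exact hne hEi
      rw [List.mem_iff_getElem]
      rcases Nat.lt_or_ge t i with h | h
      · exact ⟨t, by rw [edgeList_length, len' hm hi]; omega, edge_ins_lt hm hi h3 t h⟩
      · refine ⟨t + 1, by rw [edgeList_length, len' hm hi]; omega, ?_⟩
        have := edge_ins_gt hm hi h3 (t + 1) (by omega) (by omega)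
        simpa using this

end InsertEdge2

end PedAux
namespace PedAux
open List Finset

section Step

variable (c : InfCycle) (k : ℕ)

lemma hi_lt : ((c k).val) < (listOf c (k + 3)).length := by
  rw [length_listOf]; exact lt_of_lt_of_le (c k).isLt (by omega)

lemma len_pos : 0 < (listOf c (k + 3)).length := by rw [length_listOf]; omega

lemma nuMinus_succ :
    nuMinus c (k + 4) = (listOf c (k + 3))[(c k).val]'(hi_lt c k) := by
  rw [nuMinus, if_neg (by omega), if_neg (by omega), listOf_succ]
  exact cyclicPrev_insertIdx (succ_not_mem_listOf c k) (hi_lt c k) (by rw [length_listOf]; omega)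

lemma nuPlus_succ :
    nuPlus c (k + 4) =
      (listOf c (k + 3))[((c k).val + 1) % (listOf c (k + 3)).length]'(Nat.mod_lt _ (len_pos c k)) := by
  rw [nuPlus, if_neg (by omega), if_neg (by omega), listOf_succ]
  exact cyclicNext_insertIdx (succ_not_mem_listOf c k) (hi_lt c k) (by rw [length_listOf]; omega)

lemma nuSet_succ' :
    nuSet c (k + 4) = {(listOf c (k + 3))[(c k).val]'(hi_lt c k),
      (listOf c (k + 3))[((c k).val + 1) % (listOf c (k + 3)).length]'(Nat.mod_lt _ (len_pos c k))} := by
  rw [nuSet, nuMinus_succ, nuPlus_succ, Finset.pair_comm]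

lemma nuMinus_mem : nuMinus c (k + 4) ∈ listOf c (k + 3) := by
  rw [nuMinus_succ]; exact List.getElem_mem _

lemma nuPlus_mem : nuPlus c (k + 4) ∈ listOf c (k + 3) := by
  rw [nuPlus_succ]; exact List.getElem_mem _

lemma nuMinus_le : 1 ≤ nuMinus c (k + 4) ∧ nuMinus c (k + 4) ≤ k + 3 :=
  (mem_listOf c k _).1 (nuMinus_mem c k)

lemma nuPlus_le : 1 ≤ nuPlus c (k + 4) ∧ nuPlus c (k + 4) ≤ k + 3 :=
  (mem_listOf c k _).1 (nuPlus_mem c k)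

lemma nu_ne : nuMinus c (k + 4) ≠ nuPlus c (k + 4) := by
  rw [nuMinus_succ, nuPlus_succ]
  intro hcon
  have hnd := nodup_listOf c k
  have h3 := length_listOf c k
  have hck := (c k).isLt
  have := (hnd.getElem_inj_iff).1 hcon
  rcases Nat.lt_or_ge ((c k).val + 1) (listOf c (k + 3)).length with h | h
  · rw [Nat.mod_eq_of_lt h] at this; omega
  · rw [show (c k).val + 1 = (listOf c (k + 3)).length by omega, Nat.mod_self] at this
    omega

lemma nuSet_mem_cycleEdges : nuSet c (k + 4) ∈ cycleEdges c (k + 3) := by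
  rw [nuSet_succ', cycleEdges, List.mem_toFinset, mem_edgeList_iff]
  exact ⟨(c k).val, hi_lt c k, rfl⟩

lemma cycleEdges_step :
    cycleEdges c (k + 4) =
      insert {nuMinus c (k + 4), k + 4}
        (insert {k + 4, nuPlus c (k + 4)}
          ((cycleEdges c (k + 3)).erase (nuSet c (k + 4)))) := by
  have hm := succ_not_mem_listOf c k
  have hi := hi_lt c k
  have h3 : 3 ≤ (listOf c (k + 3)).length := by rw [length_listOf]; omega
  have hnd := nodup_listOf c k
  ext g
  rw [show cycleEdges c (k + 4) = (edgeList ((listOf c (k + 3)).insertIdx ((c k).val + 1)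
      (k + 4))).toFinset from rfl, List.mem_toFinset,
    mem_edgeList_insertIdx hm hi h3 hnd, Finset.mem_insert, Finset.mem_insert,
    Finset.mem_erase, nuMinus_succ, nuPlus_succ, nuSet_succ', cycleEdges, List.mem_toFinset]
  tauto

lemma mem_of_mem_cycleEdges {g : Finset ℕ} (hg : g ∈ cycleEdges c (k + 3)) :
    ∀ x ∈ g, 1 ≤ x ∧ x ≤ k + 3 := by
  intro x hx
  rw [← mem_listOf c k]
  rw [cycleEdges, List.mem_toFinset] at hg
  exact edge_elems_mem hg x hx

lemma cycleEdges_two {g : Finset ℕ} (hg : g ∈ cycleEdges c (k + 3)) :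
    ∃ x y, x ≠ y ∧ g = {x, y} := by
  rw [cycleEdges, List.mem_toFinset, mem_edgeList_iff] at hg
  obtain ⟨j, hj, rfl⟩ := hg
  refine ⟨_, _, ?_, rfl⟩
  intro hcon
  have hnd := nodup_listOf c k
  have h3 : (listOf c (k + 3)).length = k + 3 := length_listOf c k
  have := (hnd.getElem_inj_iff).1 hcon
  rcases Nat.lt_or_ge (j + 1) (listOf c (k + 3)).length with h | h
  · rw [Nat.mod_eq_of_lt (by omega)] at this; omega
  · rw [show j + 1 = (listOf c (k + 3)).length by omega, Nat.mod_self] at this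
    omega

end Step

end PedAux
namespace PedAux
open List Finset

variable {c : InfCycle}

lemma nuSet_elem_le {x j : ℕ} (h4 : 4 ≤ j) (hx : x ∈ nuSet c j) : 1 ≤ x ∧ x ≤ j - 1 := by
  obtain ⟨k, rfl⟩ : ∃ k, j = k + 4 := ⟨j - 4, by omega⟩
  rcases mem_pair_iff.1 hx with rfl | rfl
  · have := nuPlus_le c k; omega
  · have := nuMinus_le c k; omega

lemma persist {m n : ℕ} (h3 : 3 ≤ m) (hmn : m ≤ n) {g : Finset ℕ}
    (hel : ∀ x ∈ g, x ≤ m) :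
    g ∈ cycleEdges c n ↔
      (g ∈ cycleEdges c m ∧ ∀ j, m < j → j ≤ n → nuSet c j ≠ g) := by
  induction n, hmn using Nat.le_induction with
  | base => simp; omega
  | succ n hmn ih =>
    obtain ⟨k, rfl⟩ : ∃ k, n = k + 3 := ⟨n - 3, by omega⟩
    have hstep := cycleEdges_step c k
    have hnew : k + 4 ∉ g := fun hcon => by have := hel _ hcon; omega
    rw [show k + 3 + 1 = k + 4 from rfl, hstep]
    rw [Finset.mem_insert, Finset.mem_insert, Finset.mem_erase]
    have h1 : g ≠ {nuMinus c (k + 4), k + 4} := fun hcon => hnew (by rw [hcon]; simp)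
    have h2 : g ≠ {k + 4, nuPlus c (k + 4)} := fun hcon => hnew (by rw [hcon]; simp)
    constructor
    · rintro (hcon | hcon | ⟨hne, hmem⟩)
      · exact absurd hcon h1
      · exact absurd hcon h2
      · obtain ⟨hm, hj⟩ := ih.1 hmem
        refine ⟨hm, fun j hj1 hj2 => ?_⟩
        rcases Nat.lt_or_ge j (k + 4) with h | h
        · exact hj j hj1 (by omega)
        · have : j = k + 4 := by omega
          subst this
          exact fun hcon => hne hcon.symm
    · rintro ⟨hm, hj⟩
      refine Or.inr (Or.inr ⟨?_, ?_⟩)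
      · exact fun hcon => hj (k + 4) (by omega) (by omega) hcon.symm
      · exact ih.2 ⟨hm, fun j hj1 hj2 => hj j hj1 (by omega)⟩

lemma nuSet_ne_of_mem {n j : ℕ} {g : Finset ℕ} (hg : g ∈ cycleEdges c n)
    (h4 : 4 ≤ j) (hjn : j ≤ n) : nuSet c j ≠ g := by
  intro hcon
  subst hcon
  have hel : ∀ x ∈ nuSet c j, x ≤ j - 1 := fun x hx => (nuSet_elem_le h4 hx).2
  have := (persist (c := c) (m := j - 1) (by omega) (by omega)
    (fun x hx => by have := hel x hx; omega)).1 hg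
  exact this.2 j (by omega) hjn rfl

lemma max_mem_nu {n x w : ℕ} {g : Finset ℕ} (h3 : 3 ≤ n) (hg : g ∈ cycleEdges c n)
    (hx : x ∈ g) (hw : w ∈ g) (hwx : w ≠ x) (hmax : ∀ y ∈ g, y ≤ x) (h4 : 4 ≤ x) :
    w ∈ nuSet c x := by
  have hxn : x ≤ n := by
    obtain ⟨k, rfl⟩ : ∃ k, n = k + 3 := ⟨n - 3, by omega⟩
    exact (mem_of_mem_cycleEdges c k hg x hx).2
  have hgx : g ∈ cycleEdges c x :=
    ((persist (by omega) hxn hmax).1 hg).1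
  obtain ⟨k, rfl⟩ : ∃ k, x = k + 4 := ⟨x - 4, by omega⟩
  rw [cycleEdges_step c k, Finset.mem_insert, Finset.mem_insert, Finset.mem_erase] at hgx
  rcases hgx with rfl | rfl | ⟨_, hmem⟩
  · rcases mem_pair_iff.1 hw with rfl | rfl
    · simp [nuSet]
    · omega
  · rcases mem_pair_iff.1 hw with rfl | rfl
    · omega
    · simp [nuSet]
  · have := mem_of_mem_cycleEdges c k hmem _ hx
    omega

lemma death {m n : ℕ} (h3 : 3 ≤ m) (hmn : m ≤ n) {g : Finset ℕ}
    (hel : ∀ x ∈ g, x ≤ m) (hgm : g ∈ cycleEdges c m) (hgn : g ∉ cycleEdges c n) :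
    ∃ j, m < j ∧ j ≤ n ∧ nuSet c j = g := by
  by_contra hcon
  push_neg at hcon
  exact hgn ((persist h3 hmn hel).2 ⟨hgm, fun j h1 h2 => hcon j h1 h2⟩)

lemma create {x w : ℕ} (h4 : 4 ≤ x) (hw : w ∈ nuSet c x) :
    ({w, x} : Finset ℕ) ∈ cycleEdges c x := by
  obtain ⟨k, rfl⟩ : ∃ k, x = k + 4 := ⟨x - 4, by omega⟩
  rw [cycleEdges_step c k, Finset.mem_insert, Finset.mem_insert]
  rcases mem_pair_iff.1 hw with rfl | rfl
  · right; left; exact Finset.pair_comm _ _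
  · left; rfl

end PedAux
namespace PedAux
open SimpleGraph

section Graph

variable {V : Type} (G : SimpleGraph V)

/-- Lift a function constant on edges to connected components. -/
private lemma walk_lift {β : Sort*} (f : V → β) (h : ∀ v w, G.Adj v w → f v = f w) :
    ∀ (v w : V) (p : G.Walk v w), p.IsPath → f v = f w := by
  have key : ∀ (v w : V) (p : G.Walk v w), f v = f w := by
    intro v w p
    induction p with
    | nil => rfl
    | cons h' _ ih => exact (h _ _ h').trans ih
  exact fun v w p _ => key v w p

lemma induce_adj_iff (s : Set V) (x y : ↥s) : (G.induce s).Adj x y ↔ G.Adj x y := by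
  simp [SimpleGraph.induce, SimpleGraph.comap_adj]

lemma card_cc_insert_isolated (s : Set V) (a : V) (ha : a ∉ s) (hfin : s.Finite)
    (hiso : ∀ b ∈ s, ¬ G.Adj a b) :
    Nat.card (G.induce (insert a s)).ConnectedComponent =
      Nat.card (G.induce s).ConnectedComponent + 1 := by
  classical
  have hins : ∀ v : ↥(insert a s), (v : V) ≠ a → (v : V) ∈ s := by
    rintro ⟨v, hv⟩ hne
    rcases Set.mem_insert_iff.1 hv with h | h
    · exact absurd h hne
    · exact h
  let F : ↥(insert a s) → (G.induce s).ConnectedComponent ⊕ Unit := fun v =>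
    if h : (v : V) = a then Sum.inr ()
    else Sum.inl ((G.induce s).connectedComponentMk ⟨v, hins v h⟩)
  have hF : ∀ v w, (G.induce (insert a s)).Adj v w → F v = F w := by
    intro v w hvw
    rw [induce_adj_iff] at hvw
    by_cases hv : (v : V) = a
    · rw [hv] at hvw
      by_cases hw : (w : V) = a
      · rw [hw] at hvw; exact absurd hvw (G.loopless.irrefl a)
      · exact absurd hvw (hiso _ (hins w hw))
    · by_cases hw : (w : V) = a
      · rw [hw] at hvw
        exact absurd hvw.symm (hiso _ (hins v hv))
      · simp only [F, dif_neg hv, dif_neg hw]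
        exact congrArg _ (ConnectedComponent.sound
          (Adj.reachable (by rw [induce_adj_iff]; exact hvw)))
  let Finv : (G.induce s).ConnectedComponent ⊕ Unit → (G.induce (insert a s)).ConnectedComponent :=
    Sum.elim (ConnectedComponent.lift
      (fun v => (G.induce (insert a s)).connectedComponentMk ⟨v, Set.mem_insert_of_mem a v.2⟩)
      (walk_lift _ _ (fun v w hvw => ConnectedComponent.sound
        (Adj.reachable (by rw [induce_adj_iff]; rw [induce_adj_iff] at hvw; exact hvw)))))
    (fun _ => (G.induce (insert a s)).connectedComponentMk ⟨a, Set.mem_insert a s⟩)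
  have hequiv : (G.induce (insert a s)).ConnectedComponent ≃
      (G.induce s).ConnectedComponent ⊕ Unit := by
    refine ⟨ConnectedComponent.lift F (walk_lift _ F hF), Finv, ?_, ?_⟩
    · intro x
      induction x using ConnectedComponent.ind with
      | _ v =>
        by_cases hv : (v : V) = a
        · simp only [ConnectedComponent.lift_mk, F, dif_pos hv, Finv, Sum.elim_inr]
          congr 1
          exact Subtype.ext hv.symm
        · simp only [ConnectedComponent.lift_mk, F, dif_neg hv, Finv, Sum.elim_inl,
            ConnectedComponent.lift_mk]
    · intro x
      rcases x with x | u
      · induction x using ConnectedComponent.ind with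
        | _ v =>
          simp only [Finv, Sum.elim_inl, ConnectedComponent.lift_mk, F]
          rw [dif_neg (by intro hcon; exact ha (hcon ▸ v.2))]
      · simp [Finv, F]
  rw [Nat.card_congr hequiv]
  have : Finite ↥s := hfin.to_subtype
  have : Finite (G.induce s).ConnectedComponent := Quot.finite _
  rw [Nat.card_sum]
  simp

lemma card_cc_insert_pendant (s : Set V) (a k₀ : V) (ha : a ∉ s) (hk : k₀ ∈ s)
    (hadj : G.Adj a k₀) (huniq : ∀ b ∈ s, G.Adj a b → b = k₀) :
    Nat.card (G.induce (insert a s)).ConnectedComponent =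
      Nat.card (G.induce s).ConnectedComponent := by
  classical
  have hins : ∀ v : ↥(insert a s), (v : V) ≠ a → (v : V) ∈ s := by
    rintro ⟨v, hv⟩ hne
    rcases Set.mem_insert_iff.1 hv with h | h
    · exact absurd h hne
    · exact h
  let F : ↥(insert a s) → (G.induce s).ConnectedComponent := fun v =>
    if h : (v : V) = a then (G.induce s).connectedComponentMk ⟨k₀, hk⟩
    else (G.induce s).connectedComponentMk ⟨v, hins v h⟩
  have hF : ∀ v w, (G.induce (insert a s)).Adj v w → F v = F w := by
    intro v w hvw
    rw [induce_adj_iff] at hvw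
    by_cases hv : (v : V) = a
    · rw [hv] at hvw
      have hws : (w : V) ∈ s := hins w (fun hw => by rw [hw] at hvw; exact G.loopless.irrefl a hvw)
      have hwk : (w : V) = k₀ := huniq _ hws hvw
      simp only [F, dif_pos hv, dif_neg (fun hcon : (w : V) = a => ha (hcon ▸ hws))]
      congr 1
      exact Subtype.ext hwk.symm
    · by_cases hw : (w : V) = a
      · rw [hw] at hvw
        have hvs : (v : V) ∈ s := hins v hv
        have hvk : (v : V) = k₀ := huniq _ hvs hvw.symm
        simp only [F, dif_neg hv, dif_pos hw]
        congr 1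
        exact Subtype.ext hvk
      · simp only [F, dif_neg hv, dif_neg hw]
        exact ConnectedComponent.sound (Adj.reachable (by rw [induce_adj_iff]; exact hvw))
  let Finv : (G.induce s).ConnectedComponent → (G.induce (insert a s)).ConnectedComponent :=
    ConnectedComponent.lift
      (fun v => (G.induce (insert a s)).connectedComponentMk ⟨v, Set.mem_insert_of_mem a v.2⟩)
      (walk_lift _ _ (fun v w hvw => ConnectedComponent.sound
        (Adj.reachable (by rw [induce_adj_iff]; rw [induce_adj_iff] at hvw; exact hvw))))
  have hequiv : (G.induce (insert a s)).ConnectedComponent ≃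
      (G.induce s).ConnectedComponent := by
    refine ⟨ConnectedComponent.lift F (walk_lift _ F hF), Finv, ?_, ?_⟩
    · intro x
      induction x using ConnectedComponent.ind with
      | _ v =>
        by_cases hv : (v : V) = a
        · simp only [ConnectedComponent.lift_mk, F, dif_pos hv, Finv]
          refine ConnectedComponent.sound (Adj.reachable ?_)
          rw [induce_adj_iff]
          show G.Adj k₀ (v : V)
          rw [hv]
          exact hadj.symm
        · simp only [ConnectedComponent.lift_mk, F, dif_neg hv, Finv]
    · intro x
      induction x using ConnectedComponent.ind with
      | _ v =>
        simp only [Finv, ConnectedComponent.lift_mk, F]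
        rw [dif_neg (by intro hcon; exact ha (hcon ▸ v.2))]
  exact Nat.card_congr hequiv

lemma induce_eq_induce {G G' : SimpleGraph V} {s : Set V}
    (h : ∀ x y, x ∈ s → y ∈ s → (G.Adj x y ↔ G'.Adj x y)) :
    G.induce s = G'.induce s := by
  ext ⟨x, hx⟩ ⟨y, hy⟩
  rw [induce_adj_iff, induce_adj_iff]
  exact h x y hx hy

end Graph

end PedAux
namespace PedAux
open List Finset

/-! ### Agreement: everything depends on finitely many coordinates -/

lemma listOf_agree (c c' : InfCycle) :
    ∀ m, (∀ j, j + 4 ≤ m → c j = c' j) → listOf c m = listOf c' m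
  | 0, _ => rfl
  | 1, _ => rfl
  | 2, _ => rfl
  | 3, _ => rfl
  | (t + 4), h => by
    rw [listOf_succ, listOf_succ, listOf_agree c c' (t + 3) (fun j hj => h j (by omega)),
      h t (by omega)]

lemma nuPlus_agree {c c' : InfCycle} {m : ℕ} (h : ∀ j, j + 4 ≤ m → c j = c' j) :
    nuPlus c m = nuPlus c' m := by
  rw [nuPlus, nuPlus, listOf_agree c c' m h]

lemma nuMinus_agree {c c' : InfCycle} {m : ℕ} (h : ∀ j, j + 4 ≤ m → c j = c' j) :
    nuMinus c m = nuMinus c' m := by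
  rw [nuMinus, nuMinus, listOf_agree c c' m h]

lemma nuSet_agree {c c' : InfCycle} {m : ℕ} (h : ∀ j, j + 4 ≤ m → c j = c' j) :
    nuSet c m = nuSet c' m := by
  rw [nuSet, nuSet, nuPlus_agree h, nuMinus_agree h]

lemma cycleEdges_agree {c c' : InfCycle} {m : ℕ} (h : ∀ j, j + 4 ≤ m → c j = c' j) :
    cycleEdges c m = cycleEdges c' m := by
  rw [cycleEdges, cycleEdges, listOf_agree c c' m h]

/-! ### Tnum step lemmas -/

section TStep

variable (a b : InfCycle) (k : ℕ)

lemma mem_vertexSet_iff {x : ℕ} {n : ℕ} : x ∈ vertexSet a b n ↔ isVertex a b n x := Iff.rfl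

lemma vertexSet_subset : vertexSet a b (k + 3) ⊆ Set.Icc 4 (k + 3) := by
  rintro x ⟨h1, h2, _⟩; exact ⟨h1, h2⟩

lemma vertexSet_finite : (vertexSet a b (k + 3)).Finite :=
  Set.Finite.subset (Set.finite_Icc _ _) (vertexSet_subset a b k)

lemma new_not_mem : (k + 4) ∉ vertexSet a b (k + 3) := by
  rintro ⟨_, h2, _⟩; omega

lemma isVertex_succ_iff {x : ℕ} (hx : x ≤ k + 3) :
    isVertex a b (k + 4) x ↔ isVertex a b (k + 3) x := by
  unfold isVertex
  constructor <;> rintro ⟨h1, h2, h3⟩ <;> exact ⟨h1, by omega, h3⟩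

lemma vertexSet_succ_eq (h : nuSet a (k + 4) = nuSet b (k + 4)) :
    vertexSet a b (k + 4) = vertexSet a b (k + 3) := by
  ext x
  rw [mem_vertexSet_iff, mem_vertexSet_iff]
  unfold isVertex
  constructor
  · rintro ⟨h1, h2, h3⟩
    rcases Nat.lt_or_ge x (k + 4) with hx | hx
    · exact ⟨h1, by omega, h3⟩
    · exact absurd (by rw [show x = k + 4 by omega]; exact h) h3
  · rintro ⟨h1, h2, h3⟩
    exact ⟨h1, by omega, h3⟩

lemma vertexSet_succ_insert (h : nuSet a (k + 4) ≠ nuSet b (k + 4)) :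
    vertexSet a b (k + 4) = insert (k + 4) (vertexSet a b (k + 3)) := by
  ext x
  rw [mem_vertexSet_iff, Set.mem_insert_iff, mem_vertexSet_iff]
  unfold isVertex
  constructor
  · rintro ⟨h1, h2, h3⟩
    rcases Nat.lt_or_ge x (k + 4) with hx | hx
    · exact Or.inr ⟨h1, by omega, h3⟩
    · exact Or.inl (by omega)
  · rintro (rfl | ⟨h1, h2, h3⟩)
    · exact ⟨by omega, le_refl _, h⟩
    · exact ⟨h1, by omega, h3⟩

lemma pedigree_agree_on_old {x y : ℕ} (hx : x ∈ vertexSet a b (k + 3))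
    (hy : y ∈ vertexSet a b (k + 3)) :
    (pedigreeGraph a b (k + 3)).Adj x y ↔ (pedigreeGraph a b (k + 4)).Adj x y := by
  have hx4 := (isVertex_succ_iff a b k (hx.2.1)).2 hx
  have hy4 := (isVertex_succ_iff a b k (hy.2.1)).2 hy
  show (isVertex a b (k+3) x ∧ isVertex a b (k+3) y ∧ _) ↔
    (isVertex a b (k+4) x ∧ isVertex a b (k+4) y ∧ _)
  constructor
  · rintro ⟨_, _, h3⟩; exact ⟨hx4, hy4, h3⟩
  · rintro ⟨_, _, h3⟩; exact ⟨hx, hy, h3⟩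

lemma Tnum_base :
    Tnum a b (k + 3) =
      Nat.card ((pedigreeGraph a b (k + 4)).induce (vertexSet a b (k + 3))).ConnectedComponent := by
  show Nat.card ((pedigreeGraph a b (k + 3)).induce (vertexSet a b (k + 3))).ConnectedComponent = _
  rw [induce_eq_induce (fun x y hx hy => pedigree_agree_on_old a b k hx hy)]

lemma Tnum_succ_nonvertex (h : nuSet a (k + 4) = nuSet b (k + 4)) :
    Tnum a b (k + 4) = Tnum a b (k + 3) := by
  show Nat.card ((pedigreeGraph a b (k + 4)).induce (vertexSet a b (k + 4))).ConnectedComponent = _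
  rw [vertexSet_succ_eq a b k h, Tnum_base]

lemma adj_new_iff (hne : nuSet a (k + 4) ≠ nuSet b (k + 4)) {y : ℕ}
    (hy : y ∈ vertexSet a b (k + 3)) :
    (pedigreeGraph a b (k + 4)).Adj (k + 4) y ↔ edgeCond a b y (k + 4) := by
  have hy4 := (isVertex_succ_iff a b k (hy.2.1)).2 hy
  have hylt : y < k + 4 := by have := hy.2.1; omega
  show (isVertex a b (k+4) (k+4) ∧ isVertex a b (k+4) y ∧
      ((k + 4 < y ∧ edgeCond a b (k+4) y) ∨ (y < k + 4 ∧ edgeCond a b y (k+4)))) ↔ _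
  constructor
  · rintro ⟨_, _, (⟨h4, _⟩ | ⟨_, h4⟩)⟩
    · omega
    · exact h4
  · intro h
    exact ⟨⟨by omega, le_refl _, hne⟩, hy4, Or.inr ⟨hylt, h⟩⟩

lemma Tnum_succ_isolated (hne : nuSet a (k + 4) ≠ nuSet b (k + 4))
    (hiso : ∀ y ∈ vertexSet a b (k + 3), ¬ edgeCond a b y (k + 4)) :
    Tnum a b (k + 4) = Tnum a b (k + 3) + 1 := by
  show Nat.card ((pedigreeGraph a b (k + 4)).induce (vertexSet a b (k + 4))).ConnectedComponent = _
  rw [vertexSet_succ_insert a b k hne, Tnum_base,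
    card_cc_insert_isolated _ _ _ (new_not_mem a b k) (vertexSet_finite a b k)
      (fun y hy hadj => hiso y hy ((adj_new_iff a b k hne hy).1 hadj))]

lemma Tnum_succ_pendant (hne : nuSet a (k + 4) ≠ nuSet b (k + 4)) (k₀ : ℕ)
    (hk₀ : k₀ ∈ vertexSet a b (k + 3)) (hadj : edgeCond a b k₀ (k + 4))
    (huniq : ∀ y ∈ vertexSet a b (k + 3), edgeCond a b y (k + 4) → y = k₀) :
    Tnum a b (k + 4) = Tnum a b (k + 3) := by
  show Nat.card ((pedigreeGraph a b (k + 4)).induce (vertexSet a b (k + 4))).ConnectedComponent = _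
  rw [vertexSet_succ_insert a b k hne, Tnum_base,
    card_cc_insert_pendant _ _ _ k₀ (new_not_mem a b k) hk₀
      ((adj_new_iff a b k hne hk₀).2 hadj)
      (fun y hy hadj' => huniq y hy ((adj_new_iff a b k hne hy).1 hadj'))]

end TStep

end PedAux
namespace PedAux
open List Finset

section Neighbor

variable {a b : InfCycle} {k : ℕ}

lemma tri_mem (c : InfCycle) {p q : ℕ} (hp1 : 1 ≤ p) (hp3 : p ≤ 3) (hq1 : 1 ≤ q)
    (hq3 : q ≤ 3) (hpq : p ≠ q) : ({p, q} : Finset ℕ) ∈ cycleEdges c 3 := by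
  have h : cycleEdges c 3 = (edgeList [1, 2, 3]).toFinset := rfl
  rw [h]
  interval_cases p <;> interval_cases q <;> simp_all <;> decide

/-- Type-1 A→B and type-2 A→B edges to the new vertex are impossible under a c-move. -/
lemma no_AB_edge (hfB : nuSet a (k + 4) ∈ cycleEdges b (k + 3)) {y : ℕ}
    (h4 : 4 ≤ y) (hy : y ≤ k + 3) :
    ¬ (nuSet a (k + 4) = nuSet b y) ∧
    ¬ (y = max (nuPlus a (k + 4)) (nuMinus a (k + 4)) ∧
        nuSet b y ∩ nuSet a (k + 4) = ∅) := by
  constructor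
  · intro hcon
    exact nuSet_ne_of_mem (c := b) hfB h4 hy hcon.symm
  · rintro ⟨hmax, hempty⟩
    have hne := nu_ne a k
    set P := nuPlus a (k + 4) with hP
    set M := nuMinus a (k + 4) with hM
    have hPmem : P ∈ nuSet a (k + 4) := by rw [nuSet]; simp [hP]
    have hMmem : M ∈ nuSet a (k + 4) := by rw [nuSet]; simp [hM]
    have hbound : ∀ z ∈ nuSet a (k + 4), z ≤ max P M := by
      intro z hz
      rcases mem_pair_iff.1 hz with rfl | rfl
      · exact le_max_left _ _
      · exact le_max_right _ _
    have hw : min P M ∈ nuSet b y := by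
      subst hmax
      refine max_mem_nu (c := b) (by omega) hfB ?_ ?_ (by omega) hbound h4
      · rcases le_total P M with h | h
        · rw [max_eq_right h]; exact hMmem
        · rw [max_eq_left h]; exact hPmem
      · rcases le_total P M with h | h
        · rw [min_eq_left h]; exact hPmem
        · rw [min_eq_right h]; exact hMmem
    have hwf : min P M ∈ nuSet a (k + 4) := by
      rcases le_total P M with h | h
      · rw [min_eq_left h]; exact hPmem
      · rw [min_eq_right h]; exact hMmem
    have : min P M ∈ nuSet b y ∩ nuSet a (k + 4) := Finset.mem_inter.2 ⟨hw, hwf⟩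
    rw [hempty] at this
    exact absurd this (Finset.notMem_empty _)

/-- If Bob's new edge is a common edge (≠ ν_A), the new vertex is isolated. -/
lemma isolated_of_common (hfB : nuSet a (k + 4) ∈ cycleEdges b (k + 3))
    (hcomm : nuSet b (k + 4) ∈ cycleEdges a (k + 3)) :
    ∀ y ∈ vertexSet a b (k + 3), ¬ edgeCond a b y (k + 4) := by
  rintro y ⟨h4, hy, _⟩ hcon
  obtain ⟨hno1, hno2⟩ := no_AB_edge hfB h4 hy
  rcases hcon with h | h | h | h
  · exact hno1 h
  · exact nuSet_ne_of_mem (c := a) hcomm h4 hy h.symm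
  · exact hno2 h
  · obtain ⟨hmax, hempty⟩ := h
    have hne := nu_ne b k
    set P := nuPlus b (k + 4) with hP
    set M := nuMinus b (k + 4) with hM
    have hPmem : P ∈ nuSet b (k + 4) := by rw [nuSet]; simp [hP]
    have hMmem : M ∈ nuSet b (k + 4) := by rw [nuSet]; simp [hM]
    have hbound : ∀ z ∈ nuSet b (k + 4), z ≤ max P M := by
      intro z hz
      rcases mem_pair_iff.1 hz with rfl | rfl
      · exact le_max_left _ _
      · exact le_max_right _ _
    have hw : min P M ∈ nuSet a y := by
      subst hmax
      refine max_mem_nu (c := a) (by omega) hcomm ?_ ?_ (by omega) hbound h4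
      · rcases le_total P M with h | h
        · rw [max_eq_right h]; exact hMmem
        · rw [max_eq_left h]; exact hPmem
      · rcases le_total P M with h | h
        · rw [min_eq_left h]; exact hPmem
        · rw [min_eq_right h]; exact hMmem
    have hwf : min P M ∈ nuSet b (k + 4) := by
      rcases le_total P M with h | h
      · rw [min_eq_left h]; exact hPmem
      · rw [min_eq_right h]; exact hMmem
    have : min P M ∈ nuSet a y ∩ nuSet b (k + 4) := Finset.mem_inter.2 ⟨hw, hwf⟩
    rw [hempty] at this
    exact absurd this (Finset.notMem_empty _)

/-- If Bob's new edge is not an edge of `A_n`, the new vertex has a unique neighbor. -/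
lemma pendant_of_noncommon (hfB : nuSet a (k + 4) ∈ cycleEdges b (k + 3))
    (hnc : nuSet b (k + 4) ∉ cycleEdges a (k + 3)) :
    ∃ k₀, (k₀ ∈ vertexSet a b (k + 3) ∧ edgeCond a b k₀ (k + 4)) ∧
      ∀ y ∈ vertexSet a b (k + 3), edgeCond a b y (k + 4) → y = k₀ := by
  classical
  have hne := nu_ne b k
  have hPle := nuPlus_le b k
  have hMle := nuMinus_le b k
  obtain ⟨x, hxd⟩ : ∃ x, x = max (nuPlus b (k + 4)) (nuMinus b (k + 4)) := ⟨_, rfl⟩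
  obtain ⟨w, hwd⟩ : ∃ w, w = min (nuPlus b (k + 4)) (nuMinus b (k + 4)) := ⟨_, rfl⟩
  have hPmem : nuPlus b (k + 4) ∈ nuSet b (k + 4) := by rw [nuSet]; simp
  have hMmem : nuMinus b (k + 4) ∈ nuSet b (k + 4) := by rw [nuSet]; simp
  have hwx : w ≠ x := by
    rcases le_total (nuPlus b (k + 4)) (nuMinus b (k + 4)) with h | h
    · rw [hwd, hxd, min_eq_left h, max_eq_right h]; intro hcon; exact hne hcon.symm
    · rw [hwd, hxd, min_eq_right h, max_eq_left h]; exact hne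
  have hxmem : x ∈ nuSet b (k + 4) := by
    rcases le_total (nuPlus b (k + 4)) (nuMinus b (k + 4)) with h | h
    · rw [hxd, max_eq_right h]; exact hMmem
    · rw [hxd, max_eq_left h]; exact hPmem
  have hwmem : w ∈ nuSet b (k + 4) := by
    rcases le_total (nuPlus b (k + 4)) (nuMinus b (k + 4)) with h | h
    · rw [hwd, min_eq_left h]; exact hPmem
    · rw [hwd, min_eq_right h]; exact hMmem
  have hbound : ∀ z ∈ nuSet b (k + 4), z ≤ x := by
    intro z hz
    rcases mem_pair_iff.1 hz with rfl | rfl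
    · rw [hxd]; exact le_max_left _ _
    · rw [hxd]; exact le_max_right _ _
  have hpair : nuSet b (k + 4) = {w, x} := by
    rcases le_total (nuPlus b (k + 4)) (nuMinus b (k + 4)) with h | h
    · rw [hwd, hxd, min_eq_left h, max_eq_right h]; rw [nuSet]
    · rw [hwd, hxd, min_eq_right h, max_eq_left h]; rw [nuSet]; exact Finset.pair_comm _ _
  have hx1 : 1 ≤ x ∧ x ≤ k + 3 := by
    rcases le_total (nuPlus b (k + 4)) (nuMinus b (k + 4)) with h | h
    · rw [hxd, max_eq_right h]; exact hMle
    · rw [hxd, max_eq_left h]; exact hPle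
  have hw1 : 1 ≤ w ∧ w ≤ k + 3 := by
    rcases le_total (nuPlus b (k + 4)) (nuMinus b (k + 4)) with h | h
    · rw [hwd, min_eq_left h]; exact hPle
    · rw [hwd, min_eq_right h]; exact hMle
  have heB : nuSet b (k + 4) ∈ cycleEdges b (k + 3) := nuSet_mem_cycleEdges b k
  obtain ⟨m0, hm0⟩ : ∃ m0, m0 = max x 3 := ⟨_, rfl⟩
  have hm03 : 3 ≤ m0 := by rw [hm0]; exact le_max_right _ _
  have hm0x : x ≤ m0 := by rw [hm0]; exact le_max_left _ _
  have hm0k : m0 ≤ k + 3 := by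
    rw [hm0]; exact max_le hx1.2 (by omega)
  have hbound0 : ∀ z ∈ nuSet b (k + 4), z ≤ m0 :=
    fun z hz => le_trans (hbound z hz) hm0x
  by_cases hA : nuSet b (k + 4) ∈ cycleEdges a m0
  · -- the edge was once an edge of A and died at k₀
    obtain ⟨k₀, hk₀1, hk₀2, hk₀3⟩ := death (c := a) hm03 hm0k hbound0 hA hnc
    have h4k₀ : 4 ≤ k₀ := by omega
    have hbk₀ : nuSet b k₀ ≠ nuSet a k₀ := by
      rw [hk₀3]
      exact nuSet_ne_of_mem (c := b) heB h4k₀ hk₀2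
    refine ⟨k₀, ⟨⟨h4k₀, hk₀2, fun hcon => hbk₀ hcon.symm⟩, Or.inr (Or.inl hk₀3.symm)⟩, ?_⟩
    rintro y ⟨hy4, hyk, _⟩ hcon
    obtain ⟨hno1, hno2⟩ := no_AB_edge hfB hy4 hyk
    rcases hcon with h | h | h | h
    · exact absurd h hno1
    · -- nuSet a y = e : y must equal k₀
      by_contra hne'
      rcases Nat.lt_or_ge y k₀ with hlt | hge
      · have hmem : nuSet b (k + 4) ∈ cycleEdges a (k₀ - 1) := by
          obtain ⟨t, rfl⟩ : ∃ t, k₀ = t + 4 := ⟨k₀ - 4, by omega⟩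
          rw [← hk₀3]
          exact nuSet_mem_cycleEdges a t
        exact nuSet_ne_of_mem (c := a) hmem hy4 (by omega) h.symm
      · have hlt : k₀ < y := by omega
        have hmem : nuSet b (k + 4) ∈ cycleEdges a (y - 1) := by
          obtain ⟨t, rfl⟩ : ∃ t, y = t + 4 := ⟨y - 4, by omega⟩
          rw [h]
          exact nuSet_mem_cycleEdges a t
        exact nuSet_ne_of_mem (c := a) hmem h4k₀ (by omega) hk₀3
    · exact absurd h hno2
    · -- type-2 B→A : impossible since e was an edge of A at time m0
      obtain ⟨hymax, hempty⟩ := h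
      have hyx : y = x := hymax.trans hxd.symm
      have hwnu : w ∈ nuSet a x :=
        max_mem_nu (c := a) hm03 hA hxmem hwmem hwx hbound (by omega)
      have : w ∈ nuSet a y ∩ nuSet b (k + 4) :=
        Finset.mem_inter.2 ⟨by rw [hyx]; exact hwnu, hwmem⟩
      rw [hempty] at this
      exact absurd this (Finset.notMem_empty _)
  · -- the edge was never an edge of A; unique neighbor is x
    have hx4 : 4 ≤ x := by
      by_contra hcon
      have : nuSet b (k + 4) ∈ cycleEdges a 3 := by
        rw [hpair]
        exact tri_mem a (by omega) (by omega) (by omega) (by omega) hwx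
      rw [show m0 = 3 by omega] at hA
      exact hA this
    rw [show m0 = x by omega] at hA
    have hwa : w ∉ nuSet a x := by
      intro hcon
      have := create (c := a) hx4 hcon
      rw [show ({w, x} : Finset ℕ) = nuSet b (k + 4) from hpair.symm] at this
      exact hA this
    have hwb : w ∈ nuSet b x :=
      max_mem_nu (c := b) (by omega) heB hxmem hwmem hwx hbound hx4
    have hxv : x ∈ vertexSet a b (k + 3) :=
      ⟨hx4, hx1.2, fun hcon => hwa (hcon ▸ hwb)⟩
    have hexempty : nuSet a x ∩ nuSet b (k + 4) = ∅ := by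
      rw [Finset.eq_empty_iff_forall_notMem]
      intro z hz
      obtain ⟨hz1, hz2⟩ := Finset.mem_inter.1 hz
      rcases mem_pair_iff.1 (hpair ▸ hz2) with rfl | rfl
      · exact hwa hz1
      · have := nuSet_elem_le (c := a) hx4 hz1
        omega
    refine ⟨x, ⟨hxv, Or.inr (Or.inr (Or.inr ⟨hxd, hexempty⟩))⟩, ?_⟩
    rintro y ⟨hy4, hyk, _⟩ hcon
    obtain ⟨hno1, hno2⟩ := no_AB_edge hfB hy4 hyk
    rcases hcon with h | h | h | h
    · exact absurd h hno1
    · -- nuSet a y = e: then e ∈ cycleEdges a x, contradiction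
      exfalso
      have hmem : nuSet b (k + 4) ∈ cycleEdges a (y - 1) := by
        obtain ⟨t, rfl⟩ : ∃ t, y = t + 4 := ⟨y - 4, by omega⟩
        rw [h]
        exact nuSet_mem_cycleEdges a t
      have hxy : x ≤ y - 1 := by
        have := nuSet_elem_le (c := a) hy4 (h ▸ hxmem)
        omega
      exact hA ((persist (c := a) (m := x) (by omega) hxy hbound).1 hmem).1
    · exact absurd h hno2
    · exact h.1.trans hxd.symm

end Neighbor

end PedAux
namespace PedAux
open List Finset

section SP

variable (c : InfCycle) (k : ℕ)

lemma cycleEdges_step' :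
    cycleEdges c (k + 4) =
      ((cycleEdges c (k + 3)).erase (nuSet c (k + 4))) ∪
        (nuSet c (k + 4)).image (fun z => ({z, k + 4} : Finset ℕ)) := by
  rw [cycleEdges_step]
  ext g
  simp only [Finset.mem_insert, Finset.mem_erase, Finset.mem_union, Finset.mem_image, nuSet,
    Finset.mem_singleton]
  constructor
  · rintro (rfl | rfl | ⟨h1, h2⟩)
    · exact Or.inr ⟨nuMinus c (k + 4), Or.inr rfl, rfl⟩
    · exact Or.inr ⟨nuPlus c (k + 4), Or.inl rfl, Finset.pair_comm _ _⟩
    · exact Or.inl ⟨h1, h2⟩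
  · rintro (⟨h1, h2⟩ | ⟨z, (rfl | rfl), rfl⟩)
    · right; right; exact ⟨h1, h2⟩
    · right; left; exact Finset.pair_comm _ _
    · left; rfl

lemma pair_new_inj : Function.Injective (fun z : ℕ => ({z, k + 4} : Finset ℕ)) := by
  intro z z' h
  rcases pair_eq_iff.1 h with ⟨h1, _⟩ | ⟨h1, h2⟩ <;> omega

lemma nuSet_card : (nuSet c (k + 4)).card = 2 := by
  rw [nuSet, Finset.card_pair (fun h => (nu_ne c k) h.symm)]

end SP

section Sv

variable (a b : InfCycle) (k : ℕ)

lemma Sval_def (n : ℕ) : Sval a b n = (cycleEdges a n ∩ cycleEdges b n).card := rfl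

lemma Sval_succ :
    Sval a b (k + 4) =
      (((cycleEdges a (k + 3)).erase (nuSet a (k + 4))) ∩
        ((cycleEdges b (k + 3)).erase (nuSet b (k + 4)))).card +
      (nuSet a (k + 4) ∩ nuSet b (k + 4)).card := by
  have hkey : ∀ (c : InfCycle) (g : Finset ℕ),
      g ∈ (cycleEdges c (k + 3)).erase (nuSet c (k + 4)) → (k + 4) ∉ g := by
    intro c g hg hcon
    have := mem_of_mem_cycleEdges c k (Finset.mem_of_mem_erase hg) _ hcon
    omega
  have hnew : ∀ (c : InfCycle) (g : Finset ℕ),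
      g ∈ (nuSet c (k + 4)).image (fun z => ({z, k + 4} : Finset ℕ)) → (k + 4) ∈ g := by
    intro c g hg
    obtain ⟨z, _, rfl⟩ := Finset.mem_image.1 hg
    simp
  have hint : cycleEdges a (k + 4) ∩ cycleEdges b (k + 4) =
      (((cycleEdges a (k + 3)).erase (nuSet a (k + 4))) ∩
        ((cycleEdges b (k + 3)).erase (nuSet b (k + 4)))) ∪
      ((nuSet a (k + 4) ∩ nuSet b (k + 4)).image (fun z => ({z, k + 4} : Finset ℕ))) := by
    rw [cycleEdges_step' a k, cycleEdges_step' b k,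
      Finset.image_inter _ _ (pair_new_inj k)]
    ext g
    simp only [Finset.mem_inter, Finset.mem_union]
    constructor
    · rintro ⟨(hA | hA), (hB | hB)⟩
      · exact Or.inl ⟨hA, hB⟩
      · exact absurd (hnew b g hB) (hkey a g hA)
      · exact absurd (hnew a g hA) (hkey b g hB)
      · exact Or.inr ⟨hA, hB⟩
    · rintro (⟨hA, hB⟩ | ⟨hA, hB⟩)
      · exact ⟨Or.inl hA, Or.inl hB⟩
      · exact ⟨Or.inr hA, Or.inr hB⟩
  rw [Sval_def, hint, Finset.card_union_of_disjoint, Finset.card_image_of_injective _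
    (pair_new_inj k)]
  rw [Finset.disjoint_left]
  intro g hg hg'
  obtain ⟨hg1, _⟩ := Finset.mem_inter.1 hg
  have h1 := hkey a g hg1
  obtain ⟨z, _, rfl⟩ := Finset.mem_image.1 hg'
  exact h1 (by simp)

/-- Class 1: Bob inserts into ν_A(n+1). -/
lemma Sval_class1 (hfA : nuSet a (k + 4) ∈ cycleEdges a (k + 3))
    (hfB : nuSet a (k + 4) ∈ cycleEdges b (k + 3))
    (heq : nuSet b (k + 4) = nuSet a (k + 4)) :
    Sval a b (k + 4) = Sval a b (k + 3) + 1 := by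
  rw [Sval_succ, heq]
  have h1 : ((cycleEdges a (k + 3)).erase (nuSet a (k + 4))) ∩
      ((cycleEdges b (k + 3)).erase (nuSet a (k + 4))) =
      (cycleEdges a (k + 3) ∩ cycleEdges b (k + 3)).erase (nuSet a (k + 4)) := by
    ext g
    simp only [Finset.mem_inter, Finset.mem_erase]
    tauto
  rw [h1, Finset.card_erase_of_mem (Finset.mem_inter.2 ⟨hfA, hfB⟩), Finset.inter_self,
    nuSet_card]
  have : 1 ≤ (cycleEdges a (k + 3) ∩ cycleEdges b (k + 3)).card :=
    Finset.card_pos.2 ⟨_, Finset.mem_inter.2 ⟨hfA, hfB⟩⟩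
  rw [Sval_def]
  omega

/-- Common-edge cases: the old-part count. -/
lemma old_inter_common (hfA : nuSet a (k + 4) ∈ cycleEdges a (k + 3))
    (hfB : nuSet a (k + 4) ∈ cycleEdges b (k + 3))
    (heA : nuSet b (k + 4) ∈ cycleEdges a (k + 3))
    (hne : nuSet b (k + 4) ≠ nuSet a (k + 4)) :
    (((cycleEdges a (k + 3)).erase (nuSet a (k + 4))) ∩
      ((cycleEdges b (k + 3)).erase (nuSet b (k + 4)))).card + 2 = Sval a b (k + 3) := by
  have heB : nuSet b (k + 4) ∈ cycleEdges b (k + 3) := nuSet_mem_cycleEdges b k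
  have h1 : ((cycleEdges a (k + 3)).erase (nuSet a (k + 4))) ∩
      ((cycleEdges b (k + 3)).erase (nuSet b (k + 4))) =
      ((cycleEdges a (k + 3) ∩ cycleEdges b (k + 3)).erase (nuSet a (k + 4))).erase
        (nuSet b (k + 4)) := by
    ext g
    simp only [Finset.mem_inter, Finset.mem_erase]
    tauto
  rw [h1, Finset.card_erase_of_mem, Finset.card_erase_of_mem]
  · have h2 : 1 ≤ (cycleEdges a (k + 3) ∩ cycleEdges b (k + 3)).card :=
      Finset.card_pos.2 ⟨_, Finset.mem_inter.2 ⟨hfA, hfB⟩⟩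
    have h3 : nuSet b (k + 4) ∈ (cycleEdges a (k + 3) ∩ cycleEdges b (k + 3)).erase
        (nuSet a (k + 4)) :=
      Finset.mem_erase.2 ⟨hne, Finset.mem_inter.2 ⟨heA, heB⟩⟩
    have h4 : 1 ≤ ((cycleEdges a (k + 3) ∩ cycleEdges b (k + 3)).erase (nuSet a (k + 4))).card :=
      Finset.card_pos.2 ⟨_, h3⟩
    have h5 := Finset.card_erase_of_mem (Finset.mem_inter.2 ⟨hfA, hfB⟩)
    rw [Sval_def]
    omega
  · exact Finset.mem_inter.2 ⟨hfA, hfB⟩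
  · exact Finset.mem_erase.2 ⟨hne, Finset.mem_inter.2 ⟨heA, heB⟩⟩

/-- Noncommon cases: the old-part count. -/
lemma old_inter_noncommon (hfA : nuSet a (k + 4) ∈ cycleEdges a (k + 3))
    (hfB : nuSet a (k + 4) ∈ cycleEdges b (k + 3))
    (heA : nuSet b (k + 4) ∉ cycleEdges a (k + 3)) :
    (((cycleEdges a (k + 3)).erase (nuSet a (k + 4))) ∩
      ((cycleEdges b (k + 3)).erase (nuSet b (k + 4)))).card + 1 = Sval a b (k + 3) := by
  have h1 : ((cycleEdges a (k + 3)).erase (nuSet a (k + 4))) ∩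
      ((cycleEdges b (k + 3)).erase (nuSet b (k + 4))) =
      (cycleEdges a (k + 3) ∩ cycleEdges b (k + 3)).erase (nuSet a (k + 4)) := by
    ext g
    simp only [Finset.mem_inter, Finset.mem_erase]
    constructor
    · rintro ⟨⟨h2, h3⟩, h4, h5⟩; exact ⟨h2, h3, h5⟩
    · rintro ⟨h2, h3, h5⟩
      exact ⟨⟨h2, h3⟩, fun hcon => heA (hcon ▸ h3), h5⟩
  rw [h1, Finset.card_erase_of_mem (Finset.mem_inter.2 ⟨hfA, hfB⟩)]
  have h2 : 1 ≤ (cycleEdges a (k + 3) ∩ cycleEdges b (k + 3)).card :=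
    Finset.card_pos.2 ⟨_, Finset.mem_inter.2 ⟨hfA, hfB⟩⟩
  rw [Sval_def]
  omega

lemma inter_card_one (hne : nuSet b (k + 4) ≠ nuSet a (k + 4))
    (hmeet : nuSet b (k + 4) ∩ nuSet a (k + 4) ≠ ∅) :
    (nuSet a (k + 4) ∩ nuSet b (k + 4)).card = 1 := by
  have hsub : nuSet a (k + 4) ∩ nuSet b (k + 4) ⊆ nuSet a (k + 4) := Finset.inter_subset_left
  have hcard : (nuSet a (k + 4) ∩ nuSet b (k + 4)).card ≤ 2 :=
    le_trans (Finset.card_le_card hsub) (le_of_eq (nuSet_card a k))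
  have hpos : 0 < (nuSet a (k + 4) ∩ nuSet b (k + 4)).card := by
    rw [Finset.card_pos, Finset.nonempty_iff_ne_empty]
    rw [Finset.inter_comm]
    exact hmeet
  rcases Nat.lt_or_ge (nuSet a (k + 4) ∩ nuSet b (k + 4)).card 2 with h | h
  · omega
  · exfalso
    have h2 : (nuSet a (k + 4) ∩ nuSet b (k + 4)).card = 2 := by omega
    have hfsub : nuSet a (k + 4) ⊆ nuSet b (k + 4) := by
      have := Finset.eq_of_subset_of_card_le hsub (by rw [h2, nuSet_card a k])
      intro z hz
      rw [← this] at hz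
      exact (Finset.mem_inter.1 hz).2
    exact hne (Finset.eq_of_subset_of_card_le
      (by rw [← Finset.inter_eq_left.2 hfsub]; exact Finset.inter_subset_right)
      (by rw [nuSet_card a k, nuSet_card b k])).symm

lemma inter_card_zero (hdisj : nuSet b (k + 4) ∩ nuSet a (k + 4) = ∅) :
    (nuSet a (k + 4) ∩ nuSet b (k + 4)).card = 0 := by
  rw [Finset.card_eq_zero, Finset.inter_comm]
  exact hdisj

/-- Class 2: common, disjoint from f : ΔS = -2. -/
lemma Sval_class2 (hfA : nuSet a (k + 4) ∈ cycleEdges a (k + 3))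
    (hfB : nuSet a (k + 4) ∈ cycleEdges b (k + 3))
    (heA : nuSet b (k + 4) ∈ cycleEdges a (k + 3))
    (hdisj : nuSet b (k + 4) ∩ nuSet a (k + 4) = ∅) :
    Sval a b (k + 4) + 2 = Sval a b (k + 3) := by
  have hne : nuSet b (k + 4) ≠ nuSet a (k + 4) := by
    intro hcon
    rw [hcon, Finset.inter_self] at hdisj
    have := nuSet_card a k
    rw [hdisj] at this
    simp at this
  rw [Sval_succ, inter_card_zero a b k hdisj]
  rw [← old_inter_common a b k hfA hfB heA hne]

/-- Class 3: common, meets f, ≠ f : ΔS = -1. -/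
lemma Sval_class3 (hfA : nuSet a (k + 4) ∈ cycleEdges a (k + 3))
    (hfB : nuSet a (k + 4) ∈ cycleEdges b (k + 3))
    (heA : nuSet b (k + 4) ∈ cycleEdges a (k + 3))
    (hne : nuSet b (k + 4) ≠ nuSet a (k + 4))
    (hmeet : nuSet b (k + 4) ∩ nuSet a (k + 4) ≠ ∅) :
    Sval a b (k + 4) + 1 = Sval a b (k + 3) := by
  rw [Sval_succ, inter_card_one a b k hne hmeet]
  rw [← old_inter_common a b k hfA hfB heA hne]

/-- Class 4: noncommon, disjoint from f : ΔS = -1. -/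
lemma Sval_class4 (hfA : nuSet a (k + 4) ∈ cycleEdges a (k + 3))
    (hfB : nuSet a (k + 4) ∈ cycleEdges b (k + 3))
    (heA : nuSet b (k + 4) ∉ cycleEdges a (k + 3))
    (hdisj : nuSet b (k + 4) ∩ nuSet a (k + 4) = ∅) :
    Sval a b (k + 4) + 1 = Sval a b (k + 3) := by
  rw [Sval_succ, inter_card_zero a b k hdisj]
  rw [← old_inter_noncommon a b k hfA hfB heA]

/-- Class 5: noncommon, meets f : ΔS = 0. -/
lemma Sval_class5 (hfA : nuSet a (k + 4) ∈ cycleEdges a (k + 3))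
    (hfB : nuSet a (k + 4) ∈ cycleEdges b (k + 3))
    (heA : nuSet b (k + 4) ∉ cycleEdges a (k + 3))
    (hmeet : nuSet b (k + 4) ∩ nuSet a (k + 4) ≠ ∅) :
    Sval a b (k + 4) = Sval a b (k + 3) := by
  have hne : nuSet b (k + 4) ≠ nuSet a (k + 4) := fun hcon => heA (hcon ▸ hfA)
  rw [Sval_succ, inter_card_one a b k hne hmeet]
  rw [← old_inter_noncommon a b k hfA hfB heA]

end Sv

end PedAux
namespace PedAux
open List Finset

/-! ### Congruence lemmas for Sval and Tnum -/

lemma Sval_congr {a a' b b' : InfCycle} {n : ℕ}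
    (hA : cycleEdges a n = cycleEdges a' n) (hB : cycleEdges b n = cycleEdges b' n) :
    Sval a b n = Sval a' b' n := by
  rw [Sval, Sval, hA, hB]

lemma isVertex_congr {a a' b b' : InfCycle} {n : ℕ}
    (hA : ∀ j, j ≤ n → nuPlus a j = nuPlus a' j ∧ nuMinus a j = nuMinus a' j)
    (hB : ∀ j, j ≤ n → nuPlus b j = nuPlus b' j ∧ nuMinus b j = nuMinus b' j)
    (x : ℕ) : isVertex a b n x ↔ isVertex a' b' n x := by
  unfold isVertex
  constructor <;> rintro ⟨h1, h2, h3⟩ <;> refine ⟨h1, h2, ?_⟩ <;>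
    rw [nuSet, nuSet] at h3 ⊢
  · rw [← (hA x h2).1, ← (hA x h2).2, ← (hB x h2).1, ← (hB x h2).2]; exact h3
  · rw [(hA x h2).1, (hA x h2).2, (hB x h2).1, (hB x h2).2]; exact h3

lemma edgeCond_congr {a a' b b' : InfCycle} {n : ℕ}
    (hA : ∀ j, j ≤ n → nuPlus a j = nuPlus a' j ∧ nuMinus a j = nuMinus a' j)
    (hB : ∀ j, j ≤ n → nuPlus b j = nuPlus b' j ∧ nuMinus b j = nuMinus b' j)
    (x y : ℕ) (hx : x ≤ n) (hy : y ≤ n) : edgeCond a b x y ↔ edgeCond a' b' x y := by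
  have hSA : ∀ j, j ≤ n → nuSet a j = nuSet a' j := fun j hj => by
    rw [nuSet, nuSet, (hA j hj).1, (hA j hj).2]
  have hSB : ∀ j, j ≤ n → nuSet b j = nuSet b' j := fun j hj => by
    rw [nuSet, nuSet, (hB j hj).1, (hB j hj).2]
  unfold edgeCond
  rw [hSA y hy, hSB y hy, hSA x hx, hSB x hx, (hA y hy).1, (hA y hy).2, (hB y hy).1,
    (hB y hy).2]

lemma Tnum_congr {a a' b b' : InfCycle} {n : ℕ}
    (hA : ∀ j, j ≤ n → nuPlus a j = nuPlus a' j ∧ nuMinus a j = nuMinus a' j)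
    (hB : ∀ j, j ≤ n → nuPlus b j = nuPlus b' j ∧ nuMinus b j = nuMinus b' j) :
    Tnum a b n = Tnum a' b' n := by
  have hvs : vertexSet a b n = vertexSet a' b' n := by
    ext x
    exact isVertex_congr hA hB x
  have hped : pedigreeGraph a b n = pedigreeGraph a' b' n := by
    apply SimpleGraph.ext
    funext x y
    show (isVertex a b n x ∧ isVertex a b n y ∧ _) = (isVertex a' b' n x ∧ _ ∧ _)
    apply propext
    constructor
    · rintro ⟨h1, h2, h3⟩
      have hx := h1.2.1
      have hy := h2.2.1
      refine ⟨(isVertex_congr hA hB x).1 h1, (isVertex_congr hA hB y).1 h2, ?_⟩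
      rcases h3 with ⟨hlt, hec⟩ | ⟨hlt, hec⟩
      · exact Or.inl ⟨hlt, (edgeCond_congr hA hB x y hx hy).1 hec⟩
      · exact Or.inr ⟨hlt, (edgeCond_congr hA hB y x hy hx).1 hec⟩
    · rintro ⟨h1, h2, h3⟩
      have hx := h1.2.1
      have hy := h2.2.1
      refine ⟨(isVertex_congr hA hB x).2 h1, (isVertex_congr hA hB y).2 h2, ?_⟩
      rcases h3 with ⟨hlt, hec⟩ | ⟨hlt, hec⟩
      · exact Or.inl ⟨hlt, (edgeCond_congr hA hB x y hx hy).2 hec⟩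
      · exact Or.inr ⟨hlt, (edgeCond_congr hA hB y x hy hx).2 hec⟩
  show Nat.card ((pedigreeGraph a b n).induce (vertexSet a b n)).ConnectedComponent = _
  rw [hped, hvs]
  rfl

/-- The S and T values at time `k+4` only depend on Bob's first `k+1` choices. -/
lemma event_congr (σ : AliceStrategy) {b b' : InfCycle} (k : ℕ)
    (h : ∀ j, j ≤ k → b j = b' j) :
    Sval (σ.play b) b (k + 4) = Sval (σ.play b') b' (k + 4) ∧
    Tnum (σ.play b) b (k + 4) = Tnum (σ.play b') b' (k + 4) := by
  have hplay : ∀ i, i ≤ k → σ.play b i = σ.play b' i := fun i hi =>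
    σ.adapted b b' i (fun j hj => h j (by omega))
  have hA : ∀ m, m ≤ k + 4 → (∀ j, j + 4 ≤ m → σ.play b j = σ.play b' j) := by
    intro m hm j hj
    exact hplay j (by omega)
  have hB : ∀ m, m ≤ k + 4 → (∀ j, j + 4 ≤ m → b j = b' j) := by
    intro m hm j hj
    exact h j (by omega)
  constructor
  · exact Sval_congr (cycleEdges_agree (hA _ (le_refl _))) (cycleEdges_agree (hB _ (le_refl _)))
  · exact Tnum_congr
      (fun j hj => ⟨nuPlus_agree (hA j hj), nuMinus_agree (hA j hj)⟩)
      (fun j hj => ⟨nuPlus_agree (hB j hj), nuMinus_agree (hB j hj)⟩)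

end PedAux
namespace PedAux
open MeasureTheory ProbabilityTheory Finset

lemma prefixEvent_measurable (b₀ : InfCycle) (m : ℕ) : MeasurableSet (prefixEvent b₀ m) := by
  have h : prefixEvent b₀ m = ⋂ (j : ℕ) (_ : j < m), (fun b : InfCycle => b j) ⁻¹' {b₀ j} := by
    ext b
    simp [prefixEvent, Set.mem_iInter]
  rw [h]
  exact MeasurableSet.iInter fun j => MeasurableSet.iInter fun _ =>
    (measurable_pi_apply j) (MeasurableSet.singleton _)

lemma mem_prefixEvent_update {b₀ : InfCycle} {k : ℕ} {v : Fin (k + 3)} {b : InfCycle}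
    (hb : b ∈ prefixEvent (Function.update b₀ k v) (k + 1)) :
    b ∈ prefixEvent b₀ k ∧ b k = v := by
  constructor
  · intro j hj
    rw [hb j (by omega), Function.update_of_ne (by omega) _ _]
  · rw [hb k (by omega), Function.update_self]

lemma cond_prefix (μ : Measure InfCycle) (hμ : IsCycleMeasure μ) (b₀ : InfCycle) (k : ℕ)
    (E : Set InfCycle) (F : Finset (Fin (k + 3)))
    (hE : ∀ b, b ∈ prefixEvent b₀ k → (b ∈ E ↔ b k ∈ F)) :
    ProbabilityTheory.cond μ (prefixEvent b₀ k) E =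
      (F.card : ENNReal) / (((k + 3 : ℕ) : ENNReal)) := by
  obtain ⟨hprob, hpre⟩ := hμ
  have hms := prefixEvent_measurable b₀ k
  rw [ProbabilityTheory.cond_apply hms]
  have hdecomp : prefixEvent b₀ k ∩ E =
      ⋃ v ∈ F, prefixEvent (Function.update b₀ k v) (k + 1) := by
    ext b
    simp only [Set.mem_inter_iff, Set.mem_iUnion, exists_prop]
    constructor
    · rintro ⟨hbp, hbE⟩
      refine ⟨b k, (hE b hbp).1 hbE, ?_⟩
      intro j hj
      rcases Nat.lt_or_ge j k with h | h
      · rw [Function.update_of_ne (by omega) _ _]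
        exact hbp j h
      · have : j = k := by omega
        subst this
        rw [Function.update_self]
    · rintro ⟨v, hvF, hb⟩
      obtain ⟨hbp, hbk⟩ := mem_prefixEvent_update hb
      exact ⟨hbp, (hE b hbp).2 (hbk ▸ hvF)⟩
  have hdisj : (↑F : Set (Fin (k + 3))).PairwiseDisjoint
      (fun v => prefixEvent (Function.update b₀ k v) (k + 1)) := by
    intro v _ w _ hvw
    refine Set.disjoint_left.2 ?_
    intro b hbv hbw
    obtain ⟨_, h1⟩ := mem_prefixEvent_update hbv
    obtain ⟨_, h2⟩ := mem_prefixEvent_update hbw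
    exact hvw (h1 ▸ h2 ▸ rfl)
  rw [hdecomp]
  rw [measure_biUnion_finset hdisj (fun v _ => prefixEvent_measurable _ _)]
  have hval : ∀ v : Fin (k + 3), μ (prefixEvent (Function.update b₀ k v) (k + 1)) =
      (∏ j ∈ Finset.range k, ((j + 3 : ℕ) : ENNReal)⁻¹) * ((k + 3 : ℕ) : ENNReal)⁻¹ := by
    intro v
    rw [hpre _ (k + 1), Finset.prod_range_succ]
  rw [Finset.sum_congr rfl (fun v _ => hval v), Finset.sum_const, hpre b₀ k]
  have hP0 : (∏ j ∈ Finset.range k, ((j + 3 : ℕ) : ENNReal)⁻¹) ≠ 0 :=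
    Finset.prod_ne_zero_iff.2 (fun j _ => ENNReal.inv_ne_zero.2 (ENNReal.natCast_ne_top _))
  have hPt : (∏ j ∈ Finset.range k, ((j + 3 : ℕ) : ENNReal)⁻¹) ≠ ⊤ :=
    ENNReal.prod_ne_top (fun j _ => ENNReal.inv_ne_top.2 (by
      exact_mod_cast (by omega : (j : ℕ) + 3 ≠ 0)))
  rw [nsmul_eq_mul, div_eq_mul_inv]
  calc (∏ j ∈ Finset.range k, ((j + 3 : ℕ) : ENNReal)⁻¹)⁻¹ *
      ((F.card : ENNReal) * ((∏ j ∈ Finset.range k, ((j + 3 : ℕ) : ENNReal)⁻¹) *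
        ((k + 3 : ℕ) : ENNReal)⁻¹)) =
      (F.card : ENNReal) * ((k + 3 : ℕ) : ENNReal)⁻¹ *
        ((∏ j ∈ Finset.range k, ((j + 3 : ℕ) : ENNReal)⁻¹)⁻¹ *
          (∏ j ∈ Finset.range k, ((j + 3 : ℕ) : ENNReal)⁻¹)) := by ring
    _ = (F.card : ENNReal) * ((k + 3 : ℕ) : ENNReal)⁻¹ := by
        rw [ENNReal.inv_mul_cancel hP0 hPt, mul_one]

end PedAux
namespace PedAux
open List Finset

lemma getElem_list_congr {α : Type} {l l' : List α} (h : l = l') {i : ℕ} {hi : i < l.length} :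
    l[i]'hi = l'[i]'(h ▸ hi) := by subst h; rfl

lemma nuSet_update (b₀ : InfCycle) (k : ℕ) (v : Fin (k + 3)) :
    nuSet (Function.update b₀ k v) (k + 4) =
      (edgeList (listOf b₀ (k + 3)))[v.val]'(by
        rw [edgeList_length, length_listOf]; exact v.isLt) := by
  have hL : listOf (Function.update b₀ k v) (k + 3) = listOf b₀ (k + 3) :=
    listOf_agree _ _ _ (fun j hj => Function.update_of_ne (by omega) _ _)
  have hkv : Function.update b₀ k v k = v := Function.update_self _ _ _
  have e1 : (Function.update b₀ k v k).val = v.val := by rw [hkv]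
  have h1 : (listOf (Function.update b₀ k v) (k + 3))[(Function.update b₀ k v k).val]'(hi_lt _ k) =
      (listOf b₀ (k + 3))[v.val]'(by rw [length_listOf]; exact v.isLt) := by
    rw [getElem_congr' e1, getElem_list_congr hL]
  have h2 : (listOf (Function.update b₀ k v) (k + 3))[((Function.update b₀ k v k).val + 1) %
        (listOf (Function.update b₀ k v) (k + 3)).length]'(Nat.mod_lt _ (len_pos _ k)) =
      (listOf b₀ (k + 3))[(v.val + 1) % (listOf b₀ (k + 3)).length]'(Nat.mod_lt _ (len_pos b₀ k)) := by
    rw [getElem_congr' (show ((Function.update b₀ k v k).val + 1) %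
        (listOf (Function.update b₀ k v) (k + 3)).length = (v.val + 1) %
        (listOf (Function.update b₀ k v) (k + 3)).length by rw [e1]),
      getElem_list_congr hL,
      getElem_congr' (show (v.val + 1) % (listOf (Function.update b₀ k v) (k + 3)).length =
        (v.val + 1) % (listOf b₀ (k + 3)).length by rw [hL])]
  rw [nuSet_succ', edgeList_getElem _ _ (by rw [length_listOf]; exact v.isLt), h1, h2]

lemma adj_positions {l : List ℕ} (hl : l.Nodup) (h3 : 3 ≤ l.length) {t j : ℕ}
    (ht : t < l.length) (hj : j < l.length)
    (hne : (edgeList l)[j]'(by rw [edgeList_length]; omega) ≠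
      (edgeList l)[t]'(by rw [edgeList_length]; omega))
    (hmeet : ((edgeList l)[j]'(by rw [edgeList_length]; omega) ∩
      (edgeList l)[t]'(by rw [edgeList_length]; omega) : Finset ℕ) ≠ ∅) :
    j = (t + 1) % l.length ∨ j = (t + (l.length - 1)) % l.length := by
  obtain ⟨z, hz⟩ := Finset.nonempty_iff_ne_empty.2 hmeet
  obtain ⟨hz1, hz2⟩ := Finset.mem_inter.1 hz
  rw [edgeList_getElem l j hj] at hz1
  rw [edgeList_getElem l t ht] at hz2
  have hj1 : (j + 1) % l.length < l.length := Nat.mod_lt _ (by omega)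
  have ht1 : (t + 1) % l.length < l.length := Nat.mod_lt _ (by omega)
  have hjt : j ≠ t := by
    intro hcon
    subst hcon
    exact hne rfl
  rcases mem_pair_iff.1 hz1 with rfl | rfl <;> rcases mem_pair_iff.1 hz2 with h | h
  · exact absurd ((hl.getElem_inj_iff).1 h) hjt
  · exact Or.inl ((hl.getElem_inj_iff).1 h)
  · -- l[(j+1) % n] = l[t]
    have he : (j + 1) % l.length = t := (hl.getElem_inj_iff).1 h
    right
    rcases Nat.lt_or_ge (j + 1) l.length with hc | hc
    · rw [Nat.mod_eq_of_lt hc] at he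
      subst he
      rw [show j + 1 + (l.length - 1) = l.length + j by omega, Nat.add_mod_left,
        Nat.mod_eq_of_lt hj]
    · have hjn : j + 1 = l.length := by omega
      rw [hjn, Nat.mod_self] at he
      subst he
      rw [Nat.zero_add, Nat.mod_eq_of_lt (by omega)]
      omega
  · -- l[(j+1) % n] = l[(t+1) % n]
    exfalso
    have he : (j + 1) % l.length = (t + 1) % l.length := (hl.getElem_inj_iff).1 h
    rcases Nat.lt_or_ge (j + 1) l.length with hc | hc <;>
      rcases Nat.lt_or_ge (t + 1) l.length with hd | hd
    · rw [Nat.mod_eq_of_lt hc, Nat.mod_eq_of_lt hd] at he; omega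
    · rw [Nat.mod_eq_of_lt hc, show t + 1 = l.length by omega, Nat.mod_self] at he; omega
    · rw [show j + 1 = l.length by omega, Nat.mod_self, Nat.mod_eq_of_lt hd] at he; omega
    · omega

/-- The master classification of Bob's possible moves under a c-move. -/
lemma classify (σ : AliceStrategy) (b₀ : InfCycle) (k : ℕ)
    (hc : nuSet (σ.play b₀) (k + 4) ∈ cycleEdges b₀ (k + 3)) (v : Fin (k + 3)) :
    (nuSet (Function.update b₀ k v) (k + 4) = nuSet (σ.play b₀) (k + 4) →
      Sval (σ.play (Function.update b₀ k v)) (Function.update b₀ k v) (k + 4) =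
        Sval (σ.play b₀) b₀ (k + 3) + 1 ∧
      Tnum (σ.play (Function.update b₀ k v)) (Function.update b₀ k v) (k + 4) =
        Tnum (σ.play b₀) b₀ (k + 3)) ∧
    (nuSet (Function.update b₀ k v) (k + 4) ∈ cycleEdges (σ.play b₀) (k + 3) →
     nuSet (Function.update b₀ k v) (k + 4) ∩ nuSet (σ.play b₀) (k + 4) = ∅ →
      Sval (σ.play (Function.update b₀ k v)) (Function.update b₀ k v) (k + 4) + 2 =
        Sval (σ.play b₀) b₀ (k + 3) ∧
      Tnum (σ.play (Function.update b₀ k v)) (Function.update b₀ k v) (k + 4) =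
        Tnum (σ.play b₀) b₀ (k + 3) + 1) ∧
    (nuSet (Function.update b₀ k v) (k + 4) ∈ cycleEdges (σ.play b₀) (k + 3) →
     nuSet (Function.update b₀ k v) (k + 4) ≠ nuSet (σ.play b₀) (k + 4) →
     nuSet (Function.update b₀ k v) (k + 4) ∩ nuSet (σ.play b₀) (k + 4) ≠ ∅ →
      Sval (σ.play (Function.update b₀ k v)) (Function.update b₀ k v) (k + 4) + 1 =
        Sval (σ.play b₀) b₀ (k + 3) ∧
      Tnum (σ.play (Function.update b₀ k v)) (Function.update b₀ k v) (k + 4) =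
        Tnum (σ.play b₀) b₀ (k + 3) + 1) ∧
    (nuSet (Function.update b₀ k v) (k + 4) ∉ cycleEdges (σ.play b₀) (k + 3) →
     nuSet (Function.update b₀ k v) (k + 4) ∩ nuSet (σ.play b₀) (k + 4) = ∅ →
      Sval (σ.play (Function.update b₀ k v)) (Function.update b₀ k v) (k + 4) + 1 =
        Sval (σ.play b₀) b₀ (k + 3) ∧
      Tnum (σ.play (Function.update b₀ k v)) (Function.update b₀ k v) (k + 4) =
        Tnum (σ.play b₀) b₀ (k + 3)) ∧
    (nuSet (Function.update b₀ k v) (k + 4) ∉ cycleEdges (σ.play b₀) (k + 3) →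
     nuSet (Function.update b₀ k v) (k + 4) ∩ nuSet (σ.play b₀) (k + 4) ≠ ∅ →
      Sval (σ.play (Function.update b₀ k v)) (Function.update b₀ k v) (k + 4) =
        Sval (σ.play b₀) b₀ (k + 3) ∧
      Tnum (σ.play (Function.update b₀ k v)) (Function.update b₀ k v) (k + 4) =
        Tnum (σ.play b₀) b₀ (k + 3)) := by
  set a₀ := σ.play b₀ with ha₀
  set bv := Function.update b₀ k v with hbv
  set av := σ.play bv with hav
  have haux : ∀ j, j ≠ k → bv j = b₀ j := fun j hj => Function.update_of_ne hj _ _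
  have hplay : ∀ i, i ≤ k → av i = a₀ i := fun i hi =>
    σ.adapted bv b₀ i (fun j hj => haux j (by omega))
  have hA4 : ∀ m, m ≤ k + 4 → ∀ j, j + 4 ≤ m → av j = a₀ j := fun m hm j hj =>
    hplay j (by omega)
  have hB3 : ∀ m, m ≤ k + 3 → ∀ j, j + 4 ≤ m → bv j = b₀ j := fun m hm j hj =>
    haux j (by omega)
  have hS4 : Sval av bv (k + 4) = Sval a₀ bv (k + 4) :=
    Sval_congr (cycleEdges_agree (hA4 _ (le_refl _))) rfl
  have hT4 : Tnum av bv (k + 4) = Tnum a₀ bv (k + 4) :=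
    Tnum_congr (fun j hj => ⟨nuPlus_agree (hA4 j hj), nuMinus_agree (hA4 j hj)⟩)
      (fun j hj => ⟨rfl, rfl⟩)
  have hS3 : Sval a₀ bv (k + 3) = Sval a₀ b₀ (k + 3) :=
    Sval_congr rfl (cycleEdges_agree (hB3 _ (le_refl _)))
  have hT3 : Tnum a₀ bv (k + 3) = Tnum a₀ b₀ (k + 3) :=
    Tnum_congr (fun j hj => ⟨rfl, rfl⟩)
      (fun j hj => ⟨nuPlus_agree (hB3 _ hj), nuMinus_agree (hB3 _ hj)⟩)
  have hEB : cycleEdges bv (k + 3) = cycleEdges b₀ (k + 3) :=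
    cycleEdges_agree (hB3 _ (le_refl _))
  have hfA : nuSet a₀ (k + 4) ∈ cycleEdges a₀ (k + 3) := nuSet_mem_cycleEdges a₀ k
  have hfB : nuSet a₀ (k + 4) ∈ cycleEdges bv (k + 3) := by rw [hEB]; exact hc
  refine ⟨?_, ?_, ?_, ?_, ?_⟩
  · -- class 1
    intro heq
    constructor
    · rw [hS4, ← hS3]
      exact Sval_class1 a₀ bv k hfA hfB heq
    · rw [hT4, ← hT3]
      exact Tnum_succ_nonvertex a₀ bv k heq.symm
  · -- class 2
    intro heA hdisj
    have hne : nuSet bv (k + 4) ≠ nuSet a₀ (k + 4) := by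
      intro hcon
      rw [hcon, Finset.inter_self] at hdisj
      have h2 := nuSet_card a₀ k
      rw [hdisj] at h2
      simp at h2
    constructor
    · rw [hS4, ← hS3]
      exact Sval_class2 a₀ bv k hfA hfB heA hdisj
    · rw [hT4, ← hT3]
      exact Tnum_succ_isolated a₀ bv k (fun h => hne h.symm)
        (isolated_of_common hfB heA)
  · -- class 3
    intro heA hne hmeet
    constructor
    · rw [hS4, ← hS3]
      exact Sval_class3 a₀ bv k hfA hfB heA hne hmeet
    · rw [hT4, ← hT3]
      exact Tnum_succ_isolated a₀ bv k (fun h => hne h.symm)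
        (isolated_of_common hfB heA)
  · -- class 4
    intro heA hdisj
    have hne : nuSet bv (k + 4) ≠ nuSet a₀ (k + 4) := fun hcon => heA (hcon ▸ hfA)
    obtain ⟨k₀, ⟨hk₀v, hk₀e⟩, huniq⟩ := pendant_of_noncommon hfB heA
    constructor
    · rw [hS4, ← hS3]
      exact Sval_class4 a₀ bv k hfA hfB heA hdisj
    · rw [hT4, ← hT3]
      exact Tnum_succ_pendant a₀ bv k (fun h => hne h.symm) k₀ hk₀v hk₀e huniq
  · -- class 5
    intro heA hmeet
    have hne : nuSet bv (k + 4) ≠ nuSet a₀ (k + 4) := fun hcon => heA (hcon ▸ hfA)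
    obtain ⟨k₀, ⟨hk₀v, hk₀e⟩, huniq⟩ := pendant_of_noncommon hfB heA
    constructor
    · rw [hS4, ← hS3]
      exact Sval_class5 a₀ bv k hfA hfB heA hmeet
    · rw [hT4, ← hT3]
      exact Tnum_succ_pendant a₀ bv k (fun h => hne h.symm) k₀ hk₀v hk₀e huniq

end PedAux

open PedAux

/-- Transition probabilities of `(S, T)` when Alice plays a c-move at
time `n+1` (her chosen edge `ν_A(n+1)` is a common edge of `A_n` and `B_n`), conditioned
on Bob's choices up to time `n`. -/
theorem transition_probabilities_c_move
    (μ : Measure InfCycle) (hμ : IsCycleMeasure μ) (σ : AliceStrategy)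
    (n : ℕ) (hn : 3 ≤ n) (b₀ : InfCycle)
    (hc : nuSet (σ.play b₀) (n + 1) ∈ cycleEdges b₀ n) :
    condP μ σ b₀ n (-2) 1 = (Sstar (σ.play b₀) b₀ n : ENNReal) / (n : ENNReal) ∧
    condP μ σ b₀ n (-1) 1 ≤ 2 / (n : ENNReal) ∧
    condP μ σ b₀ n (-1) 0 = (Rval (σ.play b₀) b₀ n : ENNReal) / (n : ENNReal) ∧
    condP μ σ b₀ n 0 0 ≤ 2 / (n : ENNReal) ∧
    condP μ σ b₀ n 1 0 = 1 / (n : ENNReal) ∧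
    ∀ ds dt : ℤ, -2 ≤ ds → ds ≤ 1 → -1 ≤ dt → dt ≤ 1 →
      (ds, dt) ∉ ([(-2, 1), (-1, 1), (-1, 0), (0, 0), (1, 0)] : List (ℤ × ℤ)) →
      condP μ σ b₀ n ds dt = 0 := by
  classical
  obtain ⟨k, rfl⟩ : ∃ k, n = k + 3 := ⟨n - 3, by omega⟩
  have hc4 : nuSet (σ.play b₀) (k + 4) ∈ cycleEdges b₀ (k + 3) := hc
  -- the counting reduction
  have hcount : ∀ ds dt : ℤ, condP μ σ b₀ (k + 3) ds dt =
      ((Finset.univ.filter (fun v : Fin (k + 3) =>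
        (Sval (σ.play (Function.update b₀ k v)) (Function.update b₀ k v) (k + 4) : ℤ) =
          (Sval (σ.play b₀) b₀ (k + 3) : ℤ) + ds ∧
        (Tnum (σ.play (Function.update b₀ k v)) (Function.update b₀ k v) (k + 4) : ℤ) =
          (Tnum (σ.play b₀) b₀ (k + 3) : ℤ) + dt)).card : ENNReal) /
        (((k + 3 : ℕ)) : ENNReal) := by
    intro ds dt
    refine cond_prefix μ hμ b₀ k _ _ ?_
    intro b hb
    rw [Finset.mem_filter]
    have hagree : ∀ j, j ≤ k → b j = Function.update b₀ k (b k) j := by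
      intro j hj
      rcases Nat.lt_or_ge j k with h | h
      · rw [Function.update_of_ne (by omega)]
        exact hb j h
      · have : j = k := by omega
        subst this
        rw [Function.update_self]
    obtain ⟨hSe, hTe⟩ := event_congr σ k hagree
    simp only [Set.mem_setOf_eq]
    rw [show ((k + 3) + 1) = k + 4 from rfl, hSe, hTe]
    simp only [Finset.mem_univ, true_and]
  -- notation and basic facts
  have hlen : (edgeList (listOf b₀ (k + 3))).length = k + 3 := by
    rw [edgeList_length, length_listOf]
  have hnd : (edgeList (listOf b₀ (k + 3))).Nodup :=
    edgeList_nodup (nodup_listOf b₀ k) (by rw [length_listOf]; omega)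
  have hfA : nuSet (σ.play b₀) (k + 4) ∈ cycleEdges (σ.play b₀) (k + 3) :=
    nuSet_mem_cycleEdges (σ.play b₀) k
  obtain ⟨t, ht, hft⟩ : ∃ t, ∃ h : t < (edgeList (listOf b₀ (k + 3))).length,
      (edgeList (listOf b₀ (k + 3)))[t] = nuSet (σ.play b₀) (k + 4) :=
    List.mem_iff_getElem.1 (List.mem_toFinset.1 hc4)
  have hEv : ∀ v : Fin (k + 3), nuSet (Function.update b₀ k v) (k + 4) =
      (edgeList (listOf b₀ (k + 3)))[v.val]'(by rw [hlen]; exact v.isLt) :=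
    fun v => nuSet_update b₀ k v
  have hevB : ∀ v : Fin (k + 3),
      nuSet (Function.update b₀ k v) (k + 4) ∈ cycleEdges b₀ (k + 3) := by
    intro v
    rw [hEv v]
    exact List.mem_toFinset.2 (List.getElem_mem _)
  have hinj : ∀ v w : Fin (k + 3),
      nuSet (Function.update b₀ k v) (k + 4) = nuSet (Function.update b₀ k w) (k + 4) →
      v = w := by
    intro v w h
    rw [hEv v, hEv w] at h
    exact Fin.ext ((hnd.getElem_inj_iff).1 h)
  have hsurj : ∀ g ∈ cycleEdges b₀ (k + 3), ∃ v : Fin (k + 3),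
      nuSet (Function.update b₀ k v) (k + 4) = g := by
    intro g hg
    obtain ⟨j, hj, hgj⟩ := List.mem_iff_getElem.1 (List.mem_toFinset.1 hg)
    have hj' : j < k + 3 := by rw [hlen] at hj; exact hj
    exact ⟨⟨j, hj'⟩, by rw [hEv ⟨j, hj'⟩]; exact hgj⟩
  have hfcard := nuSet_card (σ.play b₀) k
  -- the master pointwise classification
  have hmain : ∀ v : Fin (k + 3), ∀ ds dt : ℤ,
      ((Sval (σ.play (Function.update b₀ k v)) (Function.update b₀ k v) (k + 4) : ℤ) =
          (Sval (σ.play b₀) b₀ (k + 3) : ℤ) + ds ∧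
        (Tnum (σ.play (Function.update b₀ k v)) (Function.update b₀ k v) (k + 4) : ℤ) =
          (Tnum (σ.play b₀) b₀ (k + 3) : ℤ) + dt) ↔
      ((ds = 1 ∧ dt = 0 ∧
          nuSet (Function.update b₀ k v) (k + 4) = nuSet (σ.play b₀) (k + 4)) ∨
       (ds = -2 ∧ dt = 1 ∧
          nuSet (Function.update b₀ k v) (k + 4) ∈ cycleEdges (σ.play b₀) (k + 3) ∧
          nuSet (Function.update b₀ k v) (k + 4) ∩ nuSet (σ.play b₀) (k + 4) = ∅) ∨
       (ds = -1 ∧ dt = 1 ∧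
          nuSet (Function.update b₀ k v) (k + 4) ∈ cycleEdges (σ.play b₀) (k + 3) ∧
          nuSet (Function.update b₀ k v) (k + 4) ≠ nuSet (σ.play b₀) (k + 4) ∧
          nuSet (Function.update b₀ k v) (k + 4) ∩ nuSet (σ.play b₀) (k + 4) ≠ ∅) ∨
       (ds = -1 ∧ dt = 0 ∧
          nuSet (Function.update b₀ k v) (k + 4) ∉ cycleEdges (σ.play b₀) (k + 3) ∧
          nuSet (Function.update b₀ k v) (k + 4) ∩ nuSet (σ.play b₀) (k + 4) = ∅) ∨
       (ds = 0 ∧ dt = 0 ∧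
          nuSet (Function.update b₀ k v) (k + 4) ∉ cycleEdges (σ.play b₀) (k + 3) ∧
          nuSet (Function.update b₀ k v) (k + 4) ∩ nuSet (σ.play b₀) (k + 4) ≠ ∅)) := by
    intro v ds dt
    obtain ⟨c1, c2, c3, c4, c5⟩ := classify σ b₀ k hc4 v
    constructor
    · rintro ⟨hS, hT⟩
      by_cases hef : nuSet (Function.update b₀ k v) (k + 4) = nuSet (σ.play b₀) (k + 4)
      · obtain ⟨e1, e2⟩ := c1 hef
        exact Or.inl ⟨by omega, by omega, hef⟩
      by_cases hEA : nuSet (Function.update b₀ k v) (k + 4) ∈ cycleEdges (σ.play b₀) (k + 3)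
      · by_cases hdj : nuSet (Function.update b₀ k v) (k + 4) ∩ nuSet (σ.play b₀) (k + 4) = ∅
        · obtain ⟨e1, e2⟩ := c2 hEA hdj
          exact Or.inr (Or.inl ⟨by omega, by omega, hEA, hdj⟩)
        · obtain ⟨e1, e2⟩ := c3 hEA hef hdj
          exact Or.inr (Or.inr (Or.inl ⟨by omega, by omega, hEA, hef, hdj⟩))
      · by_cases hdj : nuSet (Function.update b₀ k v) (k + 4) ∩ nuSet (σ.play b₀) (k + 4) = ∅
        · obtain ⟨e1, e2⟩ := c4 hEA hdj
          exact Or.inr (Or.inr (Or.inr (Or.inl ⟨by omega, by omega, hEA, hdj⟩)))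
        · obtain ⟨e1, e2⟩ := c5 hEA hdj
          exact Or.inr (Or.inr (Or.inr (Or.inr ⟨by omega, by omega, hEA, hdj⟩)))
    · rintro (⟨rfl, rfl, h⟩ | ⟨rfl, rfl, h1, h2⟩ | ⟨rfl, rfl, h1, h2, h3⟩ |
        ⟨rfl, rfl, h1, h2⟩ | ⟨rfl, rfl, h1, h2⟩)
      · obtain ⟨e1, e2⟩ := c1 h
        omega
      · obtain ⟨e1, e2⟩ := c2 h1 h2
        omega
      · obtain ⟨e1, e2⟩ := c3 h1 h2 h3
        omega
      · obtain ⟨e1, e2⟩ := c4 h1 h2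
        omega
      · obtain ⟨e1, e2⟩ := c5 h1 h2
        omega
  have hne33 : ((k + 3 : ℕ) : ENNReal) = ((k + 3 : ℕ) : ENNReal) := rfl
  refine ⟨?_, ?_, ?_, ?_, ?_, ?_⟩
  · -- (-2, 1) : Sstar / n
    rw [hcount]
    congr 1
    have hset : (Finset.univ.filter (fun v : Fin (k + 3) =>
        (Sval (σ.play (Function.update b₀ k v)) (Function.update b₀ k v) (k + 4) : ℤ) =
          (Sval (σ.play b₀) b₀ (k + 3) : ℤ) + (-2) ∧
        (Tnum (σ.play (Function.update b₀ k v)) (Function.update b₀ k v) (k + 4) : ℤ) =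
          (Tnum (σ.play b₀) b₀ (k + 3) : ℤ) + 1)) =
        (Finset.univ.filter (fun v : Fin (k + 3) =>
          nuSet (Function.update b₀ k v) (k + 4) ∈ cycleEdges (σ.play b₀) (k + 3) ∧
          nuSet (Function.update b₀ k v) (k + 4) ∩ nuSet (σ.play b₀) (k + 4) = ∅)) := by
      apply Finset.filter_congr
      intro v _
      rw [hmain v (-2) 1]
      constructor
      · rintro (⟨h, _⟩ | ⟨_, _, h1, h2⟩ | ⟨h, _⟩ | ⟨_, h, _⟩ | ⟨h, _⟩) <;>
          first | exact ⟨h1, h2⟩ | omega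
      · intro h
        exact Or.inr (Or.inl ⟨rfl, rfl, h⟩)
    rw [hset]
    rw [show Sstar (σ.play b₀) b₀ (k + 3) =
      ((cycleEdges (σ.play b₀) (k + 3) ∩ cycleEdges b₀ (k + 3)).filter
        (fun e => e ∩ nuSet (σ.play b₀) (k + 4) = ∅)).card from rfl]
    rw [Finset.card_bij (fun (v : Fin (k+3)) _ => nuSet (Function.update b₀ k v) (k + 4))
      ?_ ?_ ?_]
    · intro v hv
      rw [Finset.mem_filter] at hv
      exact Finset.mem_filter.2 ⟨Finset.mem_inter.2 ⟨hv.2.1, hevB v⟩, hv.2.2⟩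
    · intro v _ w _ h
      exact hinj v w h
    · intro g hg
      rw [Finset.mem_filter, Finset.mem_inter] at hg
      obtain ⟨v, hv⟩ := hsurj g hg.1.2
      refine ⟨v, Finset.mem_filter.2 ⟨Finset.mem_univ _, ?_, ?_⟩, hv⟩
      · rw [hv]; exact hg.1.1
      · rw [hv]; exact hg.2
  · -- (-1, 1) : ≤ 2 / n
    rw [hcount]
    have hsub : (Finset.univ.filter (fun v : Fin (k + 3) =>
        (Sval (σ.play (Function.update b₀ k v)) (Function.update b₀ k v) (k + 4) : ℤ) =
          (Sval (σ.play b₀) b₀ (k + 3) : ℤ) + (-1) ∧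
        (Tnum (σ.play (Function.update b₀ k v)) (Function.update b₀ k v) (k + 4) : ℤ) =
          (Tnum (σ.play b₀) b₀ (k + 3) : ℤ) + 1)) ⊆
        {(⟨(t + 1) % (k + 3), Nat.mod_lt _ (by omega)⟩ : Fin (k + 3)),
         ⟨(t + (k + 2)) % (k + 3), Nat.mod_lt _ (by omega)⟩} := by
      intro v hv
      rw [Finset.mem_filter] at hv
      rw [hmain v (-1) 1] at hv
      have hcl : nuSet (Function.update b₀ k v) (k + 4) ≠ nuSet (σ.play b₀) (k + 4) ∧
          nuSet (Function.update b₀ k v) (k + 4) ∩ nuSet (σ.play b₀) (k + 4) ≠ ∅ := by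
        rcases hv.2 with ⟨h, _⟩ | ⟨h, _⟩ | ⟨_, _, _, h1, h2⟩ | ⟨_, h, _⟩ | ⟨h, _⟩ <;>
          first | exact ⟨h1, h2⟩ | omega
      have hvne : (edgeList (listOf b₀ (k + 3)))[v.val]'(by rw [hlen]; exact v.isLt) ≠
          (edgeList (listOf b₀ (k + 3)))[t]'ht := by
        rw [hft]
        rw [hEv v] at hcl
        exact hcl.1
      have hvmeet : ((edgeList (listOf b₀ (k + 3)))[v.val]'(by rw [hlen]; exact v.isLt) ∩
          (edgeList (listOf b₀ (k + 3)))[t]'ht : Finset ℕ) ≠ ∅ := by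
        rw [hft]
        rw [hEv v] at hcl
        exact hcl.2
      have hpos := adj_positions (nodup_listOf b₀ k) (by rw [length_listOf]; omega)
        (t := t) (j := v.val) (by rw [length_listOf]; rw [hlen] at ht; exact ht)
        (by rw [length_listOf]; exact v.isLt) ?_ ?_
      · rw [length_listOf] at hpos
        rcases hpos with h | h
        · exact Finset.mem_insert.2 (Or.inl (Fin.ext h))
        · refine Finset.mem_insert.2 (Or.inr (Finset.mem_singleton.2 (Fin.ext ?_)))
          rw [h]
          congr 1
      · -- transfer hne across the two getElem-length proofs
        intro hcon
        apply hvne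
        exact hcon
      · intro hcon
        apply hvmeet
        exact hcon
    have hcard : (Finset.univ.filter (fun v : Fin (k + 3) =>
        (Sval (σ.play (Function.update b₀ k v)) (Function.update b₀ k v) (k + 4) : ℤ) =
          (Sval (σ.play b₀) b₀ (k + 3) : ℤ) + (-1) ∧
        (Tnum (σ.play (Function.update b₀ k v)) (Function.update b₀ k v) (k + 4) : ℤ) =
          (Tnum (σ.play b₀) b₀ (k + 3) : ℤ) + 1)).card ≤ 2 :=
      le_trans (Finset.card_le_card hsub)
        (le_trans (Finset.card_insert_le _ _) (by simp))
    refine le_trans (ENNReal.div_le_div_right ?_ _) (le_refl _)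
    exact_mod_cast hcard
  · -- (-1, 0) : Rval / n
    rw [hcount]
    congr 1
    have hset : (Finset.univ.filter (fun v : Fin (k + 3) =>
        (Sval (σ.play (Function.update b₀ k v)) (Function.update b₀ k v) (k + 4) : ℤ) =
          (Sval (σ.play b₀) b₀ (k + 3) : ℤ) + (-1) ∧
        (Tnum (σ.play (Function.update b₀ k v)) (Function.update b₀ k v) (k + 4) : ℤ) =
          (Tnum (σ.play b₀) b₀ (k + 3) : ℤ) + 0)) =
        (Finset.univ.filter (fun v : Fin (k + 3) =>
          nuSet (Function.update b₀ k v) (k + 4) ∉ cycleEdges (σ.play b₀) (k + 3) ∧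
          nuSet (Function.update b₀ k v) (k + 4) ∩ nuSet (σ.play b₀) (k + 4) = ∅)) := by
      apply Finset.filter_congr
      intro v _
      rw [hmain v (-1) 0]
      constructor
      · rintro (⟨h, _⟩ | ⟨h, _⟩ | ⟨_, h, _⟩ | ⟨_, _, h1, h2⟩ | ⟨_, h, _⟩) <;>
          first | exact ⟨h1, h2⟩ | omega
      · intro h
        exact Or.inr (Or.inr (Or.inr (Or.inl ⟨rfl, rfl, h⟩)))
    rw [hset]
    rw [show Rval (σ.play b₀) b₀ (k + 3) =
      ((cycleEdges b₀ (k + 3) \ cycleEdges (σ.play b₀) (k + 3)).filter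
        (fun e => e ∩ nuSet (σ.play b₀) (k + 4) = ∅)).card from rfl]
    rw [Finset.card_bij (fun (v : Fin (k+3)) _ => nuSet (Function.update b₀ k v) (k + 4))
      ?_ ?_ ?_]
    · intro v hv
      rw [Finset.mem_filter] at hv
      exact Finset.mem_filter.2 ⟨Finset.mem_sdiff.2 ⟨hevB v, hv.2.1⟩, hv.2.2⟩
    · intro v _ w _ h
      exact hinj v w h
    · intro g hg
      rw [Finset.mem_filter, Finset.mem_sdiff] at hg
      obtain ⟨v, hv⟩ := hsurj g hg.1.1
      refine ⟨v, Finset.mem_filter.2 ⟨Finset.mem_univ _, ?_, ?_⟩, hv⟩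
      · rw [hv]; exact hg.1.2
      · rw [hv]; exact hg.2
  · -- (0, 0) : ≤ 2 / n
    rw [hcount]
    have hsub : (Finset.univ.filter (fun v : Fin (k + 3) =>
        (Sval (σ.play (Function.update b₀ k v)) (Function.update b₀ k v) (k + 4) : ℤ) =
          (Sval (σ.play b₀) b₀ (k + 3) : ℤ) + 0 ∧
        (Tnum (σ.play (Function.update b₀ k v)) (Function.update b₀ k v) (k + 4) : ℤ) =
          (Tnum (σ.play b₀) b₀ (k + 3) : ℤ) + 0)) ⊆
        {(⟨(t + 1) % (k + 3), Nat.mod_lt _ (by omega)⟩ : Fin (k + 3)),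
         ⟨(t + (k + 2)) % (k + 3), Nat.mod_lt _ (by omega)⟩} := by
      intro v hv
      rw [Finset.mem_filter] at hv
      rw [hmain v 0 0] at hv
      have hcl : nuSet (Function.update b₀ k v) (k + 4) ≠ nuSet (σ.play b₀) (k + 4) ∧
          nuSet (Function.update b₀ k v) (k + 4) ∩ nuSet (σ.play b₀) (k + 4) ≠ ∅ := by
        rcases hv.2 with ⟨h, _⟩ | ⟨h, _⟩ | ⟨h, _⟩ | ⟨h, _⟩ | ⟨_, _, h1, h2⟩
        · omega
        · omega
        · omega
        · omega
        · exact ⟨fun hcon => h1 (hcon ▸ hfA), h2⟩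
      have hvne : (edgeList (listOf b₀ (k + 3)))[v.val]'(by rw [hlen]; exact v.isLt) ≠
          (edgeList (listOf b₀ (k + 3)))[t]'ht := by
        rw [hft]
        rw [hEv v] at hcl
        exact hcl.1
      have hvmeet : ((edgeList (listOf b₀ (k + 3)))[v.val]'(by rw [hlen]; exact v.isLt) ∩
          (edgeList (listOf b₀ (k + 3)))[t]'ht : Finset ℕ) ≠ ∅ := by
        rw [hft]
        rw [hEv v] at hcl
        exact hcl.2
      have hpos := adj_positions (nodup_listOf b₀ k) (by rw [length_listOf]; omega)
        (t := t) (j := v.val) (by rw [length_listOf]; rw [hlen] at ht; exact ht)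
        (by rw [length_listOf]; exact v.isLt) ?_ ?_
      · rw [length_listOf] at hpos
        rcases hpos with h | h
        · exact Finset.mem_insert.2 (Or.inl (Fin.ext h))
        · refine Finset.mem_insert.2 (Or.inr (Finset.mem_singleton.2 (Fin.ext ?_)))
          rw [h]
          congr 1
      · intro hcon
        apply hvne
        exact hcon
      · intro hcon
        apply hvmeet
        exact hcon
    have hcard : (Finset.univ.filter (fun v : Fin (k + 3) =>
        (Sval (σ.play (Function.update b₀ k v)) (Function.update b₀ k v) (k + 4) : ℤ) =
          (Sval (σ.play b₀) b₀ (k + 3) : ℤ) + 0 ∧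
        (Tnum (σ.play (Function.update b₀ k v)) (Function.update b₀ k v) (k + 4) : ℤ) =
          (Tnum (σ.play b₀) b₀ (k + 3) : ℤ) + 0)).card ≤ 2 :=
      le_trans (Finset.card_le_card hsub)
        (le_trans (Finset.card_insert_le _ _) (by simp))
    refine le_trans (ENNReal.div_le_div_right ?_ _) (le_refl _)
    exact_mod_cast hcard
  · -- (1, 0) : 1 / n
    rw [hcount]
    congr 1
    have hset : (Finset.univ.filter (fun v : Fin (k + 3) =>
        (Sval (σ.play (Function.update b₀ k v)) (Function.update b₀ k v) (k + 4) : ℤ) =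
          (Sval (σ.play b₀) b₀ (k + 3) : ℤ) + 1 ∧
        (Tnum (σ.play (Function.update b₀ k v)) (Function.update b₀ k v) (k + 4) : ℤ) =
          (Tnum (σ.play b₀) b₀ (k + 3) : ℤ) + 0)) =
        {(⟨t, by rw [hlen] at ht; exact ht⟩ : Fin (k + 3))} := by
      ext v
      rw [Finset.mem_filter, Finset.mem_singleton, hmain v 1 0]
      constructor
      · rintro ⟨_, (⟨_, _, h⟩ | ⟨h, _⟩ | ⟨h, _⟩ | ⟨h, _⟩ | ⟨_, h, _⟩)⟩
        · apply hinj
          rw [h, hEv ⟨t, by rw [hlen] at ht; exact ht⟩]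
          exact hft.symm
        · omega
        · omega
        · omega
        · omega
      · rintro rfl
        refine ⟨Finset.mem_univ _, Or.inl ⟨rfl, rfl, ?_⟩⟩
        rw [hEv ⟨t, by rw [hlen] at ht; exact ht⟩]
        exact hft
    rw [hset, Finset.card_singleton, Nat.cast_one]
  · -- all other increments have probability 0
    intro ds dt h1 h2 h3 h4 h5
    rw [hcount]
    have hempty : (Finset.univ.filter (fun v : Fin (k + 3) =>
        (Sval (σ.play (Function.update b₀ k v)) (Function.update b₀ k v) (k + 4) : ℤ) =
          (Sval (σ.play b₀) b₀ (k + 3) : ℤ) + ds ∧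
        (Tnum (σ.play (Function.update b₀ k v)) (Function.update b₀ k v) (k + 4) : ℤ) =
          (Tnum (σ.play b₀) b₀ (k + 3) : ℤ) + dt)) = ∅ := by
      rw [Finset.eq_empty_iff_forall_notMem]
      intro v hv
      rw [Finset.mem_filter] at hv
      rw [hmain v ds dt] at hv
      apply h5
      rcases hv.2 with ⟨rfl, rfl, _⟩ | ⟨rfl, rfl, _⟩ | ⟨rfl, rfl, _⟩ | ⟨rfl, rfl, _⟩ |
        ⟨rfl, rfl, _⟩ <;> simp
    rw [hempty, Finset.card_empty, Nat.cast_zero, ENNReal.zero_div]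
end

section
/- If B is a random infinite cycle, then for each n ≥ 3 the cycle B_n is uniformly distributed on the set of all cycles with node set {1,…,n}; that is, the pushforward under c ↦ B_n(c) of the product of uniform measures is the uniform measure on cycles with node set {1,…,n}. -/
open MeasureTheory

/-- Extend a finite sequence of choices `c_3, …, c_{m+2}` to an infinite cycle (padding
with arbitrary later choices; the cycle `A_{m+3}` depends only on the given choices). -/
def extendPrefix {m : ℕ} (p : ∀ j : Fin m, Fin ((j : ℕ) + 3)) : InfCycle :=
  fun i => if h : i < m then p ⟨i, h⟩ else ⟨0, by omega⟩

/-- `E` is the edge set of an (undirected Hamiltonian) cycle with node set `{1, …, n}`: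
it consists of the consecutive unordered pairs of some cyclic arrangement of `1, …, n`. -/
def IsHamCycle (n : ℕ) (E : Finset (Finset ℕ)) : Prop :=
  ∃ l : List ℕ, l.Perm (List.range' 1 n) ∧ E = (edgeList l).toFinset

namespace CycleAux
open List

def pathEdges : List ℕ → List (Finset ℕ)
  | [] => []
  | [_] => []
  | a :: b :: t => ({a, b} : Finset ℕ) :: pathEdges (b :: t)

@[simp] lemma pathEdges_nil : pathEdges [] = [] := rfl
@[simp] lemma pathEdges_single (a : ℕ) : pathEdges [a] = [] := rfl
@[simp] lemma pathEdges_cons_cons (a b : ℕ) (t : List ℕ) :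
    pathEdges (a :: b :: t) = ({a, b} : Finset ℕ) :: pathEdges (b :: t) := rfl

lemma pathEdges_append (s : List ℕ) (p : ℕ) (t : List ℕ) :
    pathEdges (s ++ p :: t) = pathEdges (s ++ [p]) ++ pathEdges (p :: t) := by
  induction s with
  | nil => cases t <;> simp
  | cons a s ih =>
    cases s with
    | nil => cases t <;> simp
    | cons b s' => simpa using ih

lemma mem_of_mem_pathEdges : ∀ (m : List ℕ), ∀ e ∈ pathEdges m, ∀ v ∈ e, v ∈ m := by
  intro m
  induction m with
  | nil => simp
  | cons a t ih =>
    cases t with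
    | nil => simp
    | cons b t' =>
      intro e he v hv
      simp only [pathEdges_cons_cons, mem_cons] at he ⊢
      rcases he with rfl | he
      · rcases Finset.mem_insert.1 hv with rfl | hv
        · exact Or.inl rfl
        · exact Or.inr (Or.inl (Finset.mem_singleton.1 hv))
      · exact Or.inr (mem_cons.1 (ih e he v hv))

lemma pathEdges_cons_append (t : List ℕ) : ∀ (a c : ℕ),
    pathEdges (a :: (t ++ [c]))
      = List.zipWith (fun x y => ({x, y} : Finset ℕ)) (a :: t) (t ++ [c]) := by
  induction t with
  | nil => intro a c; simp
  | cons b t ih => intro a c; simp [ih b c]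

lemma edgeList_eq (a : ℕ) (t : List ℕ) : edgeList (a :: t) = pathEdges ((a :: t) ++ [a]) := by
  unfold edgeList
  rw [show (1 : ℕ) = 0 + 1 from rfl, rotate_cons_succ, rotate_zero]
  exact (pathEdges_cons_append t a a).symm

lemma pathEdges_reverse : ∀ (m : List ℕ), pathEdges m.reverse = (pathEdges m).reverse
  | [] => rfl
  | [_] => rfl
  | a :: b :: t => by
    have h2 : (b :: t).reverse = t.reverse ++ [b] := by simp
    have h1 : (a :: b :: t).reverse = t.reverse ++ b :: [a] := by simp
    rw [h1, pathEdges_append t.reverse b [a], ← h2, pathEdges_reverse (b :: t)]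
    simp [Finset.pair_comm]

end CycleAux

namespace CycleAux
open List

lemma edgeSet_rotate (u v : List ℕ) (x : ℕ) :
    (edgeList (u ++ x :: v)).toFinset = (edgeList (x :: (v ++ u))).toFinset := by
  cases u with
  | nil => simp
  | cons a u' =>
    rw [show (a :: u') ++ x :: v = a :: (u' ++ x :: v) from rfl, edgeList_eq, edgeList_eq]
    have e1 : (a :: (u' ++ x :: v)) ++ [a] = (a :: u') ++ x :: (v ++ [a]) := by simp
    have e2 : (x :: (v ++ a :: u')) ++ [x] = (x :: v) ++ a :: (u' ++ [x]) := by simp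
    rw [e1, e2, pathEdges_append (a :: u') x (v ++ [a]),
      pathEdges_append (x :: v) a (u' ++ [x])]
    have e3 : x :: (v ++ [a]) = (x :: v) ++ [a] := rfl
    have e4 : a :: (u' ++ [x]) = (a :: u') ++ [x] := rfl
    rw [e3, e4]
    ext e
    simp only [toFinset_append, Finset.mem_union]
    tauto

lemma edgeSet_reverse (a : ℕ) (w : List ℕ) :
    (edgeList (a :: w.reverse)).toFinset = (edgeList (a :: w)).toFinset := by
  rw [edgeList_eq, edgeList_eq]
  have h : (a :: w.reverse) ++ [a] = ((a :: w) ++ [a]).reverse := by simp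
  rw [h, pathEdges_reverse]
  simp

lemma insertIdx_perm : ∀ (l : List ℕ) (k : ℕ) (x : ℕ), k ≤ l.length →
    (l.insertIdx k x).Perm (x :: l)
  | _, 0, _, _ => by simp
  | [], k + 1, x, h => by simp at h
  | a :: t, k + 1, x, h => by
    rw [insertIdx_succ_cons]
    exact ((insertIdx_perm t k x (by simpa using h)).cons a).trans (Perm.swap x a t)

lemma sublist_insertIdx : ∀ (l : List ℕ) (k : ℕ) (x : ℕ), l <+ l.insertIdx k x
  | l, 0, x => sublist_cons_self x l
  | [], _ + 1, _ => by simp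
  | a :: t, k + 1, x => by
    rw [insertIdx_succ_cons]
    exact (sublist_insertIdx t k x).cons₂ a

lemma sublist_erase (x : ℕ) : ∀ (l s : List ℕ), s <+ l → x ∉ s → s <+ l.erase x := by
  intro l
  induction l with
  | nil => intro s h _; simpa using h
  | cons a t ih =>
    intro s h hx
    by_cases hax : a = x
    · subst hax
      rw [erase_cons_head]
      cases h with
      | cons _ h' => exact h'
      | cons_cons _ h' => exact absurd mem_cons_self hx
    · rw [erase_cons_tail (by simpa using hax)]
      cases h with
      | cons _ h' => exact (ih _ h' hx).cons a
      | cons_cons _ h' => exact (ih _ h' (fun hm => hx (mem_cons_of_mem _ hm))).cons₂ a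

lemma insertIdx_indexOf_erase (x : ℕ) : ∀ (t : List ℕ), x ∈ t →
    (t.erase x).insertIdx (t.idxOf x) x = t := by
  intro t
  induction t with
  | nil => simp
  | cons a t ih =>
    intro hx
    by_cases hax : a = x
    · subst hax
      rw [erase_cons_head, idxOf_cons_self, insertIdx_zero]
    · rw [erase_cons_tail (by simpa using hax),
        idxOf_cons_ne _ hax, insertIdx_succ_cons,
        ih ((mem_cons.1 hx).resolve_left (fun h => hax h.symm))]

lemma insertIdx_append_length : ∀ (t₁ t₂ : List ℕ) (x : ℕ),
    (t₁ ++ t₂).insertIdx t₁.length x = t₁ ++ x :: t₂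
  | [], t₂, x => by simp
  | a :: t₁, t₂, x => by
    simp only [cons_append, length_cons, insertIdx_succ_cons,
      insertIdx_append_length t₁ t₂ x]

end CycleAux

namespace CycleAux
open List

lemma core_decomp (s v : List ℕ) (p q x : ℕ) :
    (pathEdges ((s ++ [p]) ++ q :: v)).toFinset
      = (pathEdges (s ++ [p]) ++ pathEdges (q :: v)).toFinset ∪ {({p, q} : Finset ℕ)} ∧
    (pathEdges ((s ++ [p]) ++ x :: q :: v)).toFinset
      = (pathEdges (s ++ [p]) ++ pathEdges (q :: v)).toFinset
          ∪ {({p, x} : Finset ℕ), ({x, q} : Finset ℕ)} := by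
  constructor
  · rw [show (s ++ [p]) ++ q :: v = s ++ p :: q :: v by simp,
      pathEdges_append s p (q :: v)]
    ext e
    simp only [toFinset_append, Finset.mem_union, pathEdges_cons_cons, toFinset_cons,
      Finset.mem_insert, Finset.mem_singleton]
    tauto
  · rw [show (s ++ [p]) ++ x :: q :: v = s ++ p :: x :: q :: v by simp,
      pathEdges_append s p (x :: q :: v)]
    ext e
    simp only [toFinset_append, Finset.mem_union, pathEdges_cons_cons, toFinset_cons,
      Finset.mem_insert, Finset.mem_singleton]
    tauto

lemma insert_edge_decomp (a : ℕ) (t : List ℕ) (x i : ℕ) (hi : i ≤ t.length)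
    (hx : x ∉ a :: t) :
    ∃ D : Finset (Finset ℕ), (∀ e ∈ D, x ∉ e) ∧
      (edgeList (a :: t)).toFinset
        = D ∪ {({((a :: t) ++ [a]).getD i 0, ((a :: t) ++ [a]).getD (i + 1) 0} : Finset ℕ)} ∧
      (edgeList ((a :: t).insertIdx (i + 1) x)).toFinset
        = D ∪ {({((a :: t) ++ [a]).getD i 0, x} : Finset ℕ),
               ({x, ((a :: t) ++ [a]).getD (i + 1) 0} : Finset ℕ)} := by
  set t₁ := t.take i with ht₁
  set t₂ := t.drop i with ht₂
  have htsplit : t = t₁ ++ t₂ := (take_append_drop i t).symm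
  have hlt₁ : t₁.length = i := by rw [ht₁, length_take]; omega
  -- the inserted list
  have hins : (a :: t).insertIdx (i + 1) x = a :: (t₁ ++ x :: t₂) := by
    rw [insertIdx_succ_cons]
    conv_lhs => rw [htsplit, ← hlt₁]
    rw [insertIdx_append_length]
  -- split a :: t₁ as s ++ [p]
  obtain ⟨s, p, hsp⟩ : ∃ s p, a :: t₁ = s ++ [p] := by
    rcases eq_nil_or_concat (a :: t₁) with h | ⟨s, p, h⟩
    · simp at h
    · exact ⟨s, p, by simpa using h⟩
  obtain ⟨q, v, hqv⟩ : ∃ q v, t₂ ++ [a] = q :: v := by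
    cases t₂ with
    | nil => exact ⟨a, [], rfl⟩
    | cons b t₂' => exact ⟨b, t₂' ++ [a], rfl⟩
  have hm : (a :: t) ++ [a] = (s ++ [p]) ++ q :: v := by
    rw [← hqv, htsplit,
      show (a :: (t₁ ++ t₂)) ++ [a] = (a :: t₁) ++ (t₂ ++ [a]) by simp, hsp]
  have hm' : (a :: (t₁ ++ x :: t₂)) ++ [a] = (s ++ [p]) ++ x :: q :: v := by
    rw [← hsp, ← hqv]; simp
  have hlsp : (s ++ [p]).length = i + 1 := by rw [← hsp]; simp [hlt₁]
  -- getD values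
  have hp : ((a :: t) ++ [a]).getD i 0 = p := by
    rw [hm, getD_append _ _ _ _ (by omega)]
    have : i = s.length := by simp at hlsp; omega
    rw [this, getD_append_right _ _ _ _ (le_refl _)]
    simp
  have hq : ((a :: t) ++ [a]).getD (i + 1) 0 = q := by
    rw [hm, getD_append_right _ _ _ _ (by omega), hlsp]
    simp
  obtain ⟨h1, h2⟩ := core_decomp s v p q x
  refine ⟨(pathEdges (s ++ [p]) ++ pathEdges (q :: v)).toFinset, ?_, ?_, ?_⟩
  · intro e he hxe
    rw [mem_toFinset, mem_append] at he
    have hxm : x ∈ (a :: t) ++ [a] := by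
      rw [hm]
      rcases he with he | he
      · exact mem_append_left _ (mem_of_mem_pathEdges _ e he x hxe)
      · exact mem_append_right _ (mem_of_mem_pathEdges _ e he x hxe)
    rcases mem_append.1 hxm with h | h
    · exact hx h
    · simp at h
      exact hx (by simp [h])
  · rw [hp, hq, edgeList_eq, hm, h1]
  · rw [hp, hq, hins, edgeList_eq, hm', h2]

end CycleAux

namespace CycleAux
open List

lemma getD_closed (a : ℕ) (t : List ℕ) (k : ℕ) (hk : k ≤ (a :: t).length) :
    ((a :: t) ++ [a]).getD k 0 = (a :: t).getD (k % (a :: t).length) 0 := by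
  rcases lt_or_eq_of_le hk with h | h
  · rw [Nat.mod_eq_of_lt h, getD_append _ _ _ _ h]
  · rw [h, Nat.mod_self, getD_append_right _ _ _ _ (le_refl _)]
    simp

lemma getD_inj (a : ℕ) (t : List ℕ) (hnd : (a :: t).Nodup) {u v : ℕ}
    (hu : u < (a :: t).length) (hv : v < (a :: t).length)
    (h : (a :: t).getD u 0 = (a :: t).getD v 0) : u = v := by
  rw [getD_eq_getElem _ _ hu, getD_eq_getElem _ _ hv] at h
  exact (Nodup.getElem_inj_iff hnd).1 h

lemma pair_eq_cases {p q p' q' : ℕ} (h : ({p, q} : Finset ℕ) = {p', q'}) :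
    (p = p' ∧ q = q') ∨ (p = q' ∧ q = p') := by
  have hp : p ∈ ({p', q'} : Finset ℕ) := h ▸ Finset.mem_insert_self p {q}
  have hq : q ∈ ({p', q'} : Finset ℕ) := h ▸ Finset.mem_insert_of_mem (Finset.mem_singleton_self q)
  have hp' : p' ∈ ({p, q} : Finset ℕ) := h ▸ Finset.mem_insert_self p' {q'}
  have hq' : q' ∈ ({p, q} : Finset ℕ) := h ▸ Finset.mem_insert_of_mem (Finset.mem_singleton_self q')
  simp only [Finset.mem_insert, Finset.mem_singleton] at hp hq hp' hq'
  omega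

lemma pair_getD_inj (a : ℕ) (t : List ℕ) (hnd : (a :: t).Nodup)
    (hlen : 3 ≤ (a :: t).length) {i j : ℕ}
    (hi : i < (a :: t).length) (hj : j < (a :: t).length)
    (h : ({((a :: t) ++ [a]).getD i 0, ((a :: t) ++ [a]).getD (i + 1) 0} : Finset ℕ)
       = {((a :: t) ++ [a]).getD j 0, ((a :: t) ++ [a]).getD (j + 1) 0}) : i = j := by
  set n := (a :: t).length with hn
  rw [getD_closed a t i (by omega), getD_closed a t (i+1) (by omega),
    getD_closed a t j (by omega), getD_closed a t (j+1) (by omega)] at h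
  have hmod : ∀ k : ℕ, k < n → k % n < n := fun k hk => Nat.mod_lt _ (by omega)
  rcases pair_eq_cases h with ⟨h1, h2⟩ | ⟨h1, h2⟩
  · have e1 := getD_inj a t hnd (Nat.mod_lt _ (by omega)) (Nat.mod_lt _ (by omega)) h1
    rw [Nat.mod_eq_of_lt (by omega : i < n), Nat.mod_eq_of_lt (by omega : j < n)] at e1
    exact e1
  · have e1 := getD_inj a t hnd (Nat.mod_lt _ (by omega)) (Nat.mod_lt _ (by omega)) h1
    have e2 := getD_inj a t hnd (Nat.mod_lt _ (by omega)) (Nat.mod_lt _ (by omega)) h2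
    rw [Nat.mod_eq_of_lt (by omega : i < n)] at e1
    rw [Nat.mod_eq_of_lt (by omega : j < n)] at e2
    -- e1 : i = (j+1) % n, e2 : (i+1) % n = j
    have hj1 : (j + 1) % n = if j + 1 = n then 0 else j + 1 := by
      split
      · simp_all
      · exact Nat.mod_eq_of_lt (by omega)
    have hi1 : (i + 1) % n = if i + 1 = n then 0 else i + 1 := by
      split
      · simp_all
      · exact Nat.mod_eq_of_lt (by omega)
    rw [hj1] at e1; rw [hi1] at e2
    split at e1 <;> split at e2 <;> omega

end CycleAux

namespace CycleAux
open List

lemma listOf_succ (c : InfCycle) (n : ℕ) :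
    listOf c (n + 4) = (listOf c (n + 3)).insertIdx ((c n).val + 1) (n + 4) := rfl

lemma listOf_perm (c : InfCycle) : ∀ n : ℕ, (listOf c (n + 3)).Perm (List.range' 1 (n + 3))
  | 0 => by show [1,2,3] ~ _; decide
  | n + 1 => by
    have ih := listOf_perm c n
    have hlen : (listOf c (n + 3)).length = n + 3 := by rw [ih.length_eq]; simp
    have h1 : ((listOf c (n + 3)).insertIdx ((c n).val + 1) (n + 4)).Perm
        ((n + 4) :: listOf c (n + 3)) :=
      insertIdx_perm _ _ _ (by have := (c n).isLt; omega)
    have h2 : List.range' 1 (n + 4) = List.range' 1 (n + 3) ++ [n + 4] := by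
      have h3 := range'_append_1 (s := 1) (m := n + 3) (n := 1)
      rw [show 1 + (n + 3) = n + 4 by omega] at h3
      rw [show (n + 3) + 1 = n + 4 from rfl] at h3
      rw [← h3, range'_one]
    rw [show n + 1 + 3 = n + 4 from rfl, listOf_succ, h2]
    exact h1.trans ((ih.cons (n + 4)).trans (perm_append_singleton _ _).symm)

lemma listOf_length (c : InfCycle) (n : ℕ) : (listOf c (n + 3)).length = n + 3 := by
  rw [(listOf_perm c n).length_eq]; simp

lemma listOf_nodup (c : InfCycle) (n : ℕ) : (listOf c (n + 3)).Nodup :=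
  (listOf_perm c n).nodup_iff.2 (nodup_range' (s := 1) (n := n + 3))

lemma listOf_mem_iff (c : InfCycle) (n v : ℕ) :
    v ∈ listOf c (n + 3) ↔ 1 ≤ v ∧ v < n + 4 := by
  rw [(listOf_perm c n).mem_iff, mem_range'_1]
  omega

lemma listOf_head (c : InfCycle) : ∀ n : ℕ, ∃ t, listOf c (n + 3) = 1 :: t
  | 0 => ⟨[2, 3], rfl⟩
  | n + 1 => by
    obtain ⟨t, ht⟩ := listOf_head c n
    rw [show n + 1 + 3 = n + 4 from rfl, listOf_succ, ht, insertIdx_succ_cons]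
    exact ⟨_, rfl⟩

lemma listOf_sb (c : InfCycle) : ∀ n : ℕ, [2, 3] <+ listOf c (n + 3)
  | 0 => by show [2,3] <+ [1,2,3]; decide
  | n + 1 => by
    rw [show n + 1 + 3 = n + 4 from rfl, listOf_succ]
    exact (listOf_sb c n).trans (sublist_insertIdx _ _ _)

lemma listOf_congr (b b' : InfCycle) : ∀ n : ℕ, (∀ j, j < n → b j = b' j) →
    listOf b (n + 3) = listOf b' (n + 3)
  | 0, _ => rfl
  | n + 1, h => by
    rw [show n + 1 + 3 = n + 4 from rfl, listOf_succ, listOf_succ,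
      listOf_congr b b' n (fun j hj => h j (by omega)), h n (by omega)]

/-- The type of finite prefixes of choices. -/
def Pre (n : ℕ) := ∀ j : Fin n, Fin ((j : ℕ) + 3)

def gfun (n : ℕ) (p : Pre n) : List ℕ := listOf (extendPrefix p) (n + 3)

def ffun (n : ℕ) (p : Pre n) : Finset (Finset ℕ) := (edgeList (gfun n p)).toFinset

def restr (n : ℕ) (b : InfCycle) : Pre n := fun j => b j

def initp {n : ℕ} (p : Pre (n + 1)) : Pre n := fun j => p ⟨j, by omega⟩

lemma extendPrefix_lt {m : ℕ} (p : ∀ j : Fin m, Fin ((j : ℕ) + 3)) (i : ℕ) (h : i < m) :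
    extendPrefix p i = p ⟨i, h⟩ := by
  simp [extendPrefix, h]

lemma gfun_succ (n : ℕ) (p : Pre (n + 1)) :
    gfun (n + 1) p = (gfun n (initp p)).insertIdx ((p ⟨n, by omega⟩).val + 1) (n + 4) := by
  show listOf (extendPrefix p) (n + 4) = _
  rw [listOf_succ]
  have hA : listOf (extendPrefix p) (n + 3) = gfun n (initp p) :=
    listOf_congr _ _ n (fun j hj => by
      rw [extendPrefix_lt p j (by omega), extendPrefix_lt (initp p) j hj]
      rfl)
  rw [hA, extendPrefix_lt p n (by omega)]

lemma cycleEdges_eq_ffun (b : InfCycle) (k : ℕ) :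
    cycleEdges b (k + 3) = ffun k (restr k b) := by
  show (edgeList (listOf b (k + 3))).toFinset = (edgeList (listOf _ (k + 3))).toFinset
  rw [listOf_congr b (extendPrefix (restr k b)) k (fun j hj => by
    rw [extendPrefix_lt (restr k b) j hj]; rfl)]

end CycleAux

namespace CycleAux
open List

def IsCanon (n : ℕ) (l : List ℕ) : Prop :=
  l.Perm (List.range' 1 n) ∧ (∃ t, l = 1 :: t) ∧ [2, 3] <+ l

lemma gfun_canon (n : ℕ) (p : Pre n) : IsCanon (n + 3) (gfun n p) :=
  ⟨listOf_perm _ n, listOf_head _ n, listOf_sb _ n⟩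

def snocp {n : ℕ} (p : Pre n) (i : Fin (n + 3)) : Pre (n + 1) :=
  fun j => if h : (j : ℕ) < n then p ⟨j, h⟩
    else Fin.cast (by have := j.isLt; omega) i

lemma initp_snocp {n : ℕ} (p : Pre n) (i : Fin (n + 3)) : initp (snocp p i) = p := by
  funext j
  have := j.isLt
  simp [initp, snocp, this]

lemma snocp_last {n : ℕ} (p : Pre n) (i : Fin (n + 3)) :
    ((snocp p i) ⟨n, by omega⟩).val = i.val := by
  simp [snocp]

lemma range'_split (n : ℕ) :
    List.range' 1 (n + 4) = List.range' 1 (n + 3) ++ [n + 4] := by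
  have h5 := range'_append_1 (s := 1) (m := n + 3) (n := 1)
  rw [show 1 + (n + 3) = n + 4 by omega] at h5
  rw [show (n + 3) + 1 = n + 4 from rfl] at h5
  rw [← h5, range'_one]

lemma canon_surj : ∀ n : ℕ, ∀ l : List ℕ, IsCanon (n + 3) l → ∃ p : Pre n, gfun n p = l
  | 0, l, ⟨hperm, ⟨t, ht⟩, hsb⟩ => by
    refine ⟨fun j => j.elim0, ?_⟩
    have hperm' : l ~ [1, 2, 3] := hperm.trans (by decide)
    subst ht
    have htp : t ~ [2, 3] := hperm'.cons_inv
    have : t = [2, 3] ∨ t = [3, 2] := by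
      have hlen : t.length = 2 := htp.length_eq
      match t, hlen with
      | [u, v], _ =>
        have hu : u ∈ [2, 3] := htp.mem_iff.1 (by simp)
        have hv : v ∈ [2, 3] := htp.mem_iff.1 (by simp)
        have hnd : u ≠ v := by
          have h6 := htp.nodup_iff.2 (by decide)
          simp at h6
          exact h6
        simp at hu hv
        rcases hu with rfl | rfl <;> rcases hv with rfl | rfl <;> simp_all
    rcases this with rfl | rfl
    · rfl
    · exact absurd hsb (by decide)
  | n + 1, l, ⟨hperm, ⟨t, ht⟩, hsb⟩ => by
    have hxl : (n + 4) ∈ l := hperm.mem_iff.2 (by simp [mem_range'_1])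
    have hxt : (n + 4) ∈ t := by
      rcases mem_cons.1 (ht ▸ hxl) with h | h
      · omega
      · exact h
    have htlen : t.length = n + 3 := by
      have h7 := hperm.length_eq
      rw [ht] at h7
      simp at h7
      omega
    have hilt : t.idxOf (n + 4) < n + 3 := htlen ▸ idxOf_lt_length_iff.2 hxt
    have hcanon' : IsCanon (n + 3) (1 :: t.erase (n + 4)) := by
      refine ⟨?_, ⟨_, rfl⟩, ?_⟩
      · have h1 : (1 :: t.erase (n + 4)) = l.erase (n + 4) := by
          rw [ht, erase_cons_tail (by simp)]
        have h2 : l.erase (n + 4) ~ (List.range' 1 (n + 4)).erase (n + 4) :=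
          hperm.erase (n + 4)
        have h3 : (List.range' 1 (n + 4)).erase (n + 4) = List.range' 1 (n + 3) := by
          rw [range'_split, erase_append_right _ (by simp [mem_range'_1]; omega),
            erase_cons_head]
          simp
        rw [h1, ← h3]
        exact h2
      · have h8 : [2, 3] <+ l.erase (n + 4) :=
          sublist_erase (n + 4) l [2, 3] (ht ▸ hsb) (by simp)
        rwa [ht, erase_cons_tail (by simp)] at h8
    obtain ⟨p', hp'⟩ := canon_surj n (1 :: t.erase (n + 4)) hcanon'
    refine ⟨snocp p' ⟨t.idxOf (n + 4), by omega⟩, ?_⟩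
    rw [gfun_succ, initp_snocp, snocp_last, hp', insertIdx_succ_cons,
      insertIdx_indexOf_erase (n + 4) t hxt, ← ht]

end CycleAux

namespace CycleAux
open List

lemma two_three (w : List ℕ) (h2 : 2 ∈ w) (h3 : 3 ∈ w) :
    [2, 3] <+ w ∨ [2, 3] <+ w.reverse := by
  obtain ⟨s, t, rfl⟩ := append_of_mem h2
  rcases mem_append.1 h3 with hs | hst
  · right
    rw [reverse_append, reverse_cons, append_assoc]
    obtain ⟨s1, s2, hss⟩ := append_of_mem (mem_reverse.2 hs)
    rw [hss]
    refine Sublist.trans ?_ (sublist_append_right _ _)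
    show [2, 3] <+ [2] ++ (s1 ++ 3 :: s2)
    exact Sublist.cons₂ 2 (singleton_sublist.2 (by simp))
  · left
    have h3t : 3 ∈ t := by
      rcases mem_cons.1 hst with h | h
      · omega
      · exact h
    refine Sublist.trans ?_ (sublist_append_right s _)
    exact Sublist.cons₂ 2 (singleton_sublist.2 h3t)
  
lemma exists_canon (n : ℕ) (l : List ℕ) (hl : l.Perm (List.range' 1 (n + 3))) :
    ∃ l', IsCanon (n + 3) l' ∧ (edgeList l').toFinset = (edgeList l).toFinset := by
  have h1 : (1 : ℕ) ∈ l := hl.mem_iff.2 (by simp [mem_range'_1])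
  obtain ⟨u, v, rfl⟩ := append_of_mem h1
  have hrot := edgeSet_rotate u v 1
  have hperm1 : (1 :: (v ++ u)).Perm (u ++ 1 :: v) := by
    refine Perm.trans ?_ perm_middle.symm
    exact (perm_append_comm).cons 1
  have h2 : (2 : ℕ) ∈ v ++ u := by
    have : (2 : ℕ) ∈ u ++ 1 :: v := hl.mem_iff.2 (by simp [mem_range'_1]; omega)
    have := hperm1.mem_iff.2 this
    rcases mem_cons.1 this with h | h
    · omega
    · exact h
  have h3 : (3 : ℕ) ∈ v ++ u := by
    have : (3 : ℕ) ∈ u ++ 1 :: v := hl.mem_iff.2 (by simp [mem_range'_1]; omega)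
    have := hperm1.mem_iff.2 this
    rcases mem_cons.1 this with h | h
    · omega
    · exact h
  rcases two_three (v ++ u) h2 h3 with hsb | hsb
  · exact ⟨1 :: (v ++ u), ⟨hperm1.trans hl, ⟨_, rfl⟩, hsb.cons 1⟩, hrot.symm⟩
  · refine ⟨1 :: (v ++ u).reverse, ⟨?_, ⟨_, rfl⟩, ?_⟩, ?_⟩
    · exact ((reverse_perm _).cons 1).trans (hperm1.trans hl)
    · exact hsb.cons 1
    · rw [edgeSet_reverse]
      exact hrot.symm

lemma ffun_surj (n : ℕ) (E : Finset (Finset ℕ)) (hE : IsHamCycle (n + 3) E) :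
    ∃ p : Pre n, ffun n p = E := by
  obtain ⟨l, hlperm, hlE⟩ := hE
  obtain ⟨l', hcanon, hedge⟩ := exists_canon n l hlperm
  obtain ⟨p, hp⟩ := canon_surj n l' hcanon
  exact ⟨p, by rw [ffun, hp, hedge, hlE]⟩

end CycleAux

namespace CycleAux
open List

def delE (x : ℕ) (E : Finset (Finset ℕ)) : Finset (Finset ℕ) :=
  E.filter (fun e => x ∉ e) ∪ {((E.filter (fun e => x ∈ e)).sup id).erase x}

lemma sup_erase_pair (p q x : ℕ) (hp : p ≠ x) (hq : q ≠ x) :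
    ((({({p, x} : Finset ℕ), ({x, q} : Finset ℕ)} : Finset (Finset ℕ)).sup id).erase x)
      = ({p, q} : Finset ℕ) := by
  rw [Finset.sup_insert, Finset.sup_singleton]
  ext a
  simp only [Finset.mem_erase, id, Finset.sup_eq_union, Finset.mem_union,
    Finset.mem_insert, Finset.mem_singleton]
  constructor <;> intro h <;> omega

lemma filter_mem_part (D : Finset (Finset ℕ)) (x p q : ℕ) (hD : ∀ e ∈ D, x ∉ e) :
    (D ∪ {({p, x} : Finset ℕ), ({x, q} : Finset ℕ)}).filter (fun e => x ∈ e)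
      = {({p, x} : Finset ℕ), ({x, q} : Finset ℕ)} := by
  rw [Finset.filter_union, Finset.filter_false_of_mem hD]
  rw [Finset.filter_insert, Finset.filter_singleton]
  simp

lemma filter_not_mem_part (D : Finset (Finset ℕ)) (x p q : ℕ) (hD : ∀ e ∈ D, x ∉ e) :
    (D ∪ {({p, x} : Finset ℕ), ({x, q} : Finset ℕ)}).filter (fun e => x ∉ e) = D := by
  rw [Finset.filter_union, Finset.filter_true_of_mem hD]
  rw [Finset.filter_insert, Finset.filter_singleton]
  simp

lemma delE_decomp (D : Finset (Finset ℕ)) (p q x : ℕ) (hD : ∀ e ∈ D, x ∉ e)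
    (hp : p ≠ x) (hq : q ≠ x) :
    delE x (D ∪ {({p, x} : Finset ℕ), ({x, q} : Finset ℕ)})
      = D ∪ {({p, q} : Finset ℕ)} := by
  rw [delE, filter_mem_part D x p q hD, filter_not_mem_part D x p q hD,
    sup_erase_pair p q x hp hq]

lemma closed_getD_mem (a : ℕ) (t : List ℕ) (k : ℕ) (hk : k ≤ (a :: t).length) :
    ((a :: t) ++ [a]).getD k 0 ∈ a :: t := by
  rw [getD_closed a t k hk,
    getD_eq_getElem _ _ (Nat.mod_lt _ (by simp))]
  exact getElem_mem _

lemma ffun_inj : ∀ n : ℕ, Function.Injective (ffun n)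
  | 0 => fun p q _ => funext fun j => j.elim0
  | n + 1 => by
    intro p q hf
    obtain ⟨tp, htp⟩ := listOf_head (extendPrefix (initp p)) n
    obtain ⟨tq, htq⟩ := listOf_head (extendPrefix (initp q)) n
    have hgnp : gfun n (initp p) = 1 :: tp := htp
    have hgnq : gfun n (initp q) = 1 :: tq := htq
    have hlenp : tp.length = n + 2 := by
      have := listOf_length (extendPrefix (initp p)) n
      rw [htp] at this; simpa using this
    have hlenq : tq.length = n + 2 := by
      have := listOf_length (extendPrefix (initp q)) n
      rw [htq] at this; simpa using this
    have hndp : (1 :: tp).Nodup := htp ▸ listOf_nodup (extendPrefix (initp p)) n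
    have hndq : (1 :: tq).Nodup := htq ▸ listOf_nodup (extendPrefix (initp q)) n
    have hxp : (n + 4) ∉ 1 :: tp := by
      rw [← htp, listOf_mem_iff]; omega
    have hxq : (n + 4) ∉ 1 :: tq := by
      rw [← htq, listOf_mem_iff]; omega
    set ip := (p ⟨n, by omega⟩).val with hipdef
    set iq := (q ⟨n, by omega⟩).val with hiqdef
    have hipb : ip ≤ tp.length := by
      have := (p ⟨n, by omega⟩).isLt; omega
    have hiqb : iq ≤ tq.length := by
      have := (q ⟨n, by omega⟩).isLt; omega
    obtain ⟨Dp, hDp, hbp, hap⟩ := insert_edge_decomp 1 tp (n + 4) ip hipb hxp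
    obtain ⟨Dq, hDq, hbq, haq⟩ := insert_edge_decomp 1 tq (n + 4) iq hiqb hxq
    set Pp := ((1 :: tp) ++ [1]).getD ip 0 with hPp
    set Qp := ((1 :: tp) ++ [1]).getD (ip + 1) 0 with hQp
    set Pq := ((1 :: tq) ++ [1]).getD iq 0 with hPq
    set Qq := ((1 :: tq) ++ [1]).getD (iq + 1) 0 with hQq
    have hPpx : Pp ≠ n + 4 := fun h => hxp (h ▸ closed_getD_mem 1 tp ip (by simp; omega))
    have hQpx : Qp ≠ n + 4 := fun h => hxp (h ▸ closed_getD_mem 1 tp (ip + 1) (by simp; omega))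
    have hPqx : Pq ≠ n + 4 := fun h => hxq (h ▸ closed_getD_mem 1 tq iq (by simp; omega))
    have hQqx : Qq ≠ n + 4 := fun h => hxq (h ▸ closed_getD_mem 1 tq (iq + 1) (by simp; omega))
    have hgp : gfun (n + 1) p = (1 :: tp).insertIdx (ip + 1) (n + 4) := by
      rw [gfun_succ, hgnp]
    have hgq : gfun (n + 1) q = (1 :: tq).insertIdx (iq + 1) (n + 4) := by
      rw [gfun_succ, hgnq]
    have hf' : Dp ∪ {({Pp, n + 4} : Finset ℕ), ({n + 4, Qp} : Finset ℕ)}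
        = Dq ∪ {({Pq, n + 4} : Finset ℕ), ({n + 4, Qq} : Finset ℕ)} := by
      have : ffun (n + 1) p = ffun (n + 1) q := hf
      rw [ffun, ffun, hgp, hgq, hap, haq] at this
      exact this
    -- recover the previous cycles
    have hdel := congrArg (delE (n + 4)) hf'
    rw [delE_decomp Dp Pp Qp (n + 4) hDp hPpx hQpx,
      delE_decomp Dq Pq Qq (n + 4) hDq hPqx hQqx] at hdel
    have hprev : ffun n (initp p) = ffun n (initp q) := by
      rw [ffun, ffun, hgnp, hgnq, hbp, hbq]
      exact hdel
    have hinit : initp p = initp q := ffun_inj n hprev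
    have htpq : (1 : ℕ) :: tp = 1 :: tq := by rw [← hgnp, ← hgnq, hinit]
    have htt : tp = tq := by injection htpq
    -- recover the index
    have hfilt := congrArg (fun S => ((S.filter (fun e => (n + 4) ∈ e)).sup id).erase (n + 4)) hf'
    simp only [filter_mem_part Dp (n + 4) Pp Qp hDp,
      filter_mem_part Dq (n + 4) Pq Qq hDq] at hfilt
    rw [sup_erase_pair Pp Qp (n + 4) hPpx hQpx,
      sup_erase_pair Pq Qq (n + 4) hPqx hQqx] at hfilt
    have hPQ : ({Pp, Qp} : Finset ℕ) = {Pq, Qq} := hfilt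
    rw [hPp, hQp, hPq, hQq, htt] at hPQ
    have hij : ip = iq :=
      pair_getD_inj 1 tq hndq (by simp only [length_cons, hlenq]; omega)
        (by simp only [length_cons, hlenq]; omega)
        (by simp only [length_cons, hlenq]; omega) hPQ
    -- conclude
    funext j
    by_cases hj : (j : ℕ) < n
    · have := congrFun hinit ⟨(j : ℕ), hj⟩
      simpa [initp] using this
    · have hjn : (j : ℕ) = n := by have := j.isLt; omega
      have hje : j = ⟨n, by omega⟩ := Fin.ext hjn
      rw [hje]
      exact Fin.ext hij

end CycleAux

namespace CycleAux
open List

lemma nat_prod (k : ℕ) : 2 * ∏ j ∈ Finset.range k, (j + 3) = (k + 2).factorial := by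
  induction k with
  | zero => simp [Nat.factorial]
  | succ k ih =>
    rw [Finset.prod_range_succ, ← mul_assoc, ih,
      show (k + 1 + 2).factorial = (k + 3) * (k + 2).factorial from rfl]
    exact Nat.mul_comm _ _

lemma ennreal_prod (k : ℕ) : ∏ j ∈ Finset.range k, ((j + 3 : ℕ) : ENNReal)⁻¹
    = ((∏ j ∈ Finset.range k, (j + 3) : ℕ) : ENNReal)⁻¹ := by
  induction k with
  | zero => simp
  | succ k ih =>
    rw [Finset.prod_range_succ, ih, Finset.prod_range_succ, Nat.cast_mul,
      ENNReal.mul_inv (Or.inr (ENNReal.natCast_ne_top _))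
        (Or.inl (ENNReal.natCast_ne_top _))]

end CycleAux


/-- If `B` is a random infinite cycle then `B_n` is uniformly
distributed on the set of cycles with node set `{1,…,n}`: every such cycle is attained
with probability `1/((n-1)!/2)`. -/
theorem random_cycle_uniform
    (μ : Measure InfCycle) (hμ : IsCycleMeasure μ) (n : ℕ) (hn : 3 ≤ n)
    (E : Finset (Finset ℕ)) (hE : IsHamCycle n E) :
    μ {b : InfCycle | cycleEdges b n = E} = (((n - 1).factorial / 2 : ℕ) : ENNReal)⁻¹ := by
  obtain ⟨k, rfl⟩ : ∃ k, n = k + 3 := ⟨n - 3, by omega⟩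
  obtain ⟨p₀, hp₀⟩ := CycleAux.ffun_surj k E hE
  have hset : {b : InfCycle | cycleEdges b (k + 3) = E} = prefixEvent (extendPrefix p₀) k := by
    ext b
    simp only [Set.mem_setOf_eq, prefixEvent]
    constructor
    · intro hb j hj
      have h1 : CycleAux.ffun k (CycleAux.restr k b) = E := by
        rw [← CycleAux.cycleEdges_eq_ffun]; exact hb
      have h2 : CycleAux.restr k b = p₀ := CycleAux.ffun_inj k (h1.trans hp₀.symm)
      rw [CycleAux.extendPrefix_lt p₀ j hj, ← h2]
      rfl
    · intro hb
      have h2 : CycleAux.restr k b = p₀ := funext fun j => by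
        have h3 := hb (j : ℕ) j.isLt
        rw [CycleAux.extendPrefix_lt p₀ _ j.isLt] at h3
        exact h3
      rw [CycleAux.cycleEdges_eq_ffun, h2, hp₀]
  rw [hset, hμ.2 (extendPrefix p₀) k, CycleAux.ennreal_prod]
  congr 2
  have h4 := CycleAux.nat_prod k
  have h5 : k + 3 - 1 = k + 2 := rfl
  rw [h5]
  omega
end

section
/- Let A be an infinite cycle and let 2 ≤ k ≤ n. Then ν_A^+(k) is the first node smaller than k encountered when walking along the cycle A_n starting from node k in the positive direction, and ν_A^−(k) is the first node smaller than k encountered when walking from k in the negative direction. -/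
open MeasureTheory

lemma rotate_getD (l : List ℕ) (q m : ℕ) (hm : m < l.length) :
    (l.rotate q).getD m 0 = l.getD ((m + q) % l.length) 0 := by
  rw [List.getD_eq_getElem _ _ (by rwa [List.length_rotate]), List.getElem_rotate,
    List.getD_eq_getElem]

lemma reverse_getD (l : List ℕ) (m : ℕ) (hm : m < l.length) :
    l.reverse.getD m 0 = l.getD (l.length - 1 - m) 0 := by
  rw [List.getD_eq_getElem _ _ (by rwa [List.length_reverse]), List.getElem_reverse,
    List.getD_eq_getElem]

lemma cyclicNext_eq (l : List ℕ) {x : ℕ} (hx : x ∈ l) :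
    cyclicNext l x = l.getD ((l.idxOf x + 1) % l.length) 0 := by
  unfold cyclicNext
  rw [rotate_getD l 1 _ (List.idxOf_lt_length_iff.2 hx)]

lemma cyclicPrev_eq (l : List ℕ) {x : ℕ} (hx : x ∈ l) :
    cyclicPrev l x = l.getD ((l.idxOf x + (l.length - 1)) % l.length) 0 := by
  unfold cyclicPrev
  rw [rotate_getD l _ _ (List.idxOf_lt_length_iff.2 hx)]

lemma cyclicNext_getD (l : List ℕ) (hl : l.Nodup) (m : ℕ) (hm : m < l.length) :
    cyclicNext l (l.getD m 0) = l.getD ((m + 1) % l.length) 0 := by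
  rw [List.getD_eq_getElem _ _ hm, cyclicNext_eq l (List.getElem_mem _),
    List.Nodup.idxOf_getElem hl]

lemma cyclicNext_mem (l : List ℕ) {x : ℕ} (hx : x ∈ l) : cyclicNext l x ∈ l := by
  have hN : 0 < l.length := List.length_pos_of_mem hx
  rw [cyclicNext_eq l hx, List.getD_eq_getElem _ _ (Nat.mod_lt _ hN)]
  exact List.getElem_mem _

lemma cyclicNext_rotate (l : List ℕ) (hl : l.Nodup) (q : ℕ) {x : ℕ} (hx : x ∈ l) :
    cyclicNext (l.rotate q) x = cyclicNext l x := by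
  have hN : 0 < l.length := List.length_pos_of_mem hx
  set i' := (l.rotate q).idxOf x with hi'def
  have hi' : i' < l.length := by
    rw [← List.length_rotate l q]; exact List.idxOf_lt_length_iff.2 (List.mem_rotate.2 hx)
  have hx' : (l.rotate q)[i']'(by rwa [List.length_rotate]) = x :=
    List.getElem_idxOf (by rwa [List.length_rotate])
  rw [List.getElem_rotate] at hx'
  have hidx : l.idxOf x = (i' + q) % l.length := by
    rw [← hx']; exact List.Nodup.idxOf_getElem hl _ _
  rw [cyclicNext_eq l hx, cyclicNext_eq (l.rotate q) (List.mem_rotate.2 hx), List.length_rotate,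
    ← hi'def, rotate_getD l q _ (Nat.mod_lt _ hN)]
  congr 1
  rw [hidx, Nat.mod_add_mod, Nat.mod_add_mod]
  congr 1
  omega

lemma cyclicPrev_eq_reverse (l : List ℕ) (hl : l.Nodup) {x : ℕ} (hx : x ∈ l) :
    cyclicPrev l x = cyclicNext l.reverse x := by
  have hN : 0 < l.length := List.length_pos_of_mem hx
  set i2 := l.reverse.idxOf x with hi2def
  have hi2 : i2 < l.length := by
    rw [← List.length_reverse (as := l)]; exact List.idxOf_lt_length_iff.2 (List.mem_reverse.2 hx)
  have hx2 : l.reverse[i2]'(by rwa [List.length_reverse]) = x :=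
    List.getElem_idxOf (by rwa [List.length_reverse])
  rw [List.getElem_reverse] at hx2
  have hidx : l.idxOf x = l.length - 1 - i2 := by
    rw [← hx2]; exact List.Nodup.idxOf_getElem hl _ _
  rw [cyclicPrev_eq l hx, cyclicNext_eq l.reverse (List.mem_reverse.2 hx), List.length_reverse,
    ← hi2def, reverse_getD l _ (Nat.mod_lt _ hN), hidx]
  congr 1
  rcases Nat.lt_or_ge (i2 + 1) l.length with h | h
  · rw [Nat.mod_eq_of_lt h]
    have h1 : l.length - 1 - i2 + (l.length - 1) = l.length + (l.length - 2 - i2) := by omega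
    rw [h1, Nat.add_mod_left, Nat.mod_eq_of_lt (by omega)]
    omega
  · have h1 : i2 + 1 = l.length := by omega
    rw [h1, Nat.mod_self]
    have h2 : l.length - 1 - i2 + (l.length - 1) = l.length - 1 := by omega
    rw [h2, Nat.mod_eq_of_lt (by omega)]
    omega

lemma iterate_cyclicNext (l : List ℕ) (hl : l.Nodup) {k : ℕ} (hk : k ∈ l) (i : ℕ) :
    (cyclicNext l)^[i] k = l.getD ((l.idxOf k + i) % l.length) 0 := by
  have hN : 0 < l.length := List.length_pos_of_mem hk
  induction i with
  | zero =>
    simp only [Function.iterate_zero, id_eq, Nat.add_zero,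
      Nat.mod_eq_of_lt (List.idxOf_lt_length_iff.2 hk)]
    rw [List.getD_eq_getElem _ _ (List.idxOf_lt_length_iff.2 hk), List.getElem_idxOf]
  | succ i ih =>
    rw [Function.iterate_succ_apply', ih, cyclicNext_getD l hl _ (Nat.mod_lt _ hN),
      Nat.mod_add_mod, Nat.add_assoc]

lemma core (l : List ℕ) (hnd : l.Nodup) {k y : ℕ} (hk : k ∈ l) (hy : y ∈ l) (hyk : y < k) :
    ∃ j, 1 ≤ j ∧
      (cyclicNext l)^[j] k = cyclicNext (l.filter (fun x => decide (x ≤ k))) k ∧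
      cyclicNext (l.filter (fun x => decide (x ≤ k))) k < k ∧
      ∀ i, 1 ≤ i → i < j → k ≤ (cyclicNext l)^[i] k := by
  have hN : 0 < l.length := List.length_pos_of_mem hk
  set N := l.length with hNdef
  set s := l.idxOf k with hsdef
  have hs : s < N := List.idxOf_lt_length_iff.2 hk
  -- rotate so that k is in front
  have hrot : ∀ i, i < N → (cyclicNext l)^[i] k = (l.rotate s).getD i 0 := by
    intro i hi
    rw [iterate_cyclicNext l hnd hk, rotate_getD l s i hi, Nat.add_comm]
  obtain ⟨t, hrt⟩ : ∃ t, l.rotate s = k :: t := by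
    cases hr' : l.rotate s with
    | nil => exfalso; have := List.length_rotate l s; rw [hr'] at this; simp at this; omega
    | cons b t =>
      have hb : b = k := by
        have h0 : (l.rotate s).getD 0 0 = k := by
          rw [rotate_getD l s 0 hN, Nat.zero_add, Nat.mod_eq_of_lt hs,
            List.getD_eq_getElem _ _ hs]
          exact List.getElem_idxOf hs
        rw [hr'] at h0; simpa using h0
      exact ⟨t, by rw [hb]⟩
  have htlen : t.length = N - 1 := by
    have := List.length_rotate l s; rw [hrt] at this; simp at this; omega
  have hknt : k ∉ t := by
    have : (k :: t).Nodup := by rw [← hrt]; exact List.nodup_rotate.2 hnd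
    exact (List.nodup_cons.1 this).1
  -- existence of an index with small value
  have hex : ∃ i, 1 ≤ i ∧ i < N ∧ (k :: t).getD i 0 < k := by
    have hyr : y ∈ k :: t := by rw [← hrt]; exact List.mem_rotate.2 hy
    have hyt : y ∈ t := by
      rcases List.mem_cons.1 hyr with h | h
      · omega
      · exact h
    set p := t.idxOf y with hpdef
    have hp : p < t.length := List.idxOf_lt_length_iff.2 hyt
    refine ⟨p + 1, by omega, by omega, ?_⟩
    rw [List.getD_cons_succ, List.getD_eq_getElem _ _ hp, List.getElem_idxOf]
    exact hyk
  obtain ⟨j, ⟨hj1, hjN, hjval⟩, hjmin⟩ :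
      ∃ j, (1 ≤ j ∧ j < N ∧ (k :: t).getD j 0 < k) ∧
        ∀ i, i < j → ¬(1 ≤ i ∧ i < N ∧ (k :: t).getD i 0 < k) :=
    ⟨Nat.find hex, Nat.find_spec hex, fun i hi => Nat.find_min hex hi⟩
  obtain ⟨w, hwdef⟩ : ∃ w, (k :: t).getD j 0 = w := ⟨_, rfl⟩
  rw [hwdef] at hjval
  have hmin : ∀ i, 1 ≤ i → i < j → k ≤ (cyclicNext l)^[i] k := by
    intro i h1 hij
    have := hjmin i hij
    push_neg at this
    have h3 := this h1 (by omega)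
    rw [hrot i (by omega), hrt]
    omega
  -- now compute cyclicNext of the filtered list
  set F := l.filter (fun x => decide (x ≤ k)) with hFdef
  have hFval : cyclicNext F k = w := by
    -- R = rotation of F
    have hR : (l.rotate s).filter (fun x => decide (x ≤ k)) =
        F.rotate (((l.take s).filter (fun x => decide (x ≤ k))).length) := by
      set u := (l.take s).filter (fun x => decide (x ≤ k)) with hudef
      set v := (l.drop s).filter (fun x => decide (x ≤ k)) with hvdef
      have h1 : l.rotate s = l.drop s ++ l.take s := List.rotate_eq_drop_append_take hs.le
      have h2 : F = u ++ v := by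
        rw [hFdef]; conv_lhs => rw [← List.take_append_drop s l]
        rw [List.filter_append]
      rw [h1, List.filter_append, h2,
        List.rotate_eq_drop_append_take (by simp), List.drop_left, List.take_left]
    have hFnd : F.Nodup := hnd.filter _
    have hkF : k ∈ F := List.mem_filter.2 ⟨hk, by simp⟩
    have h3 : cyclicNext F k = cyclicNext ((l.rotate s).filter (fun x => decide (x ≤ k))) k := by
      rw [hR, cyclicNext_rotate F hFnd _ hkF]
    -- compute the filter of k :: t
    have hjt : j - 1 < t.length := by omega
    have hw : w = t[j - 1] := by
      rw [← hwdef]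
      have hjj : j = (j - 1) + 1 := by omega
      conv_lhs => rw [hjj]
      rw [List.getD_cons_succ, List.getD_eq_getElem _ _ hjt]
    have htk1 : (t.take (j - 1)).filter (fun x => decide (x ≤ k)) = [] := by
      rw [List.filter_eq_nil_iff]
      intro x hx
      obtain ⟨i, hi, hix⟩ := List.mem_iff_getElem.1 hx
      have hilt : i < j - 1 := by
        have := hi; rw [List.length_take] at this; omega
      have hit : i < t.length := by omega
      rw [List.getElem_take] at hix
      have hxt : x ∈ t := by rw [← hix]; exact List.getElem_mem _
      have hxk : x ≠ k := fun h => hknt (h ▸ hxt)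
      have := hjmin (i + 1) (by omega)
      push_neg at this
      have h5 := this (by omega) (by omega)
      rw [List.getD_cons_succ, List.getD_eq_getElem _ _ hit] at h5
      simp only [decide_eq_true_eq]
      omega
    have hpw : decide (w ≤ k) = true := by simp only [decide_eq_true_eq]; omega
    have hdrop : t.drop (j - 1) = w :: t.drop j := by
      have h := List.drop_eq_getElem_cons hjt
      rw [show j - 1 + 1 = j from by omega] at h
      rw [h, ← hw]
    have hfilt : (k :: t).filter (fun x => decide (x ≤ k)) =
        k :: w :: ((t.drop j).filter (fun x => decide (x ≤ k))) := by
      rw [List.filter_cons_of_pos (by simp)]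
      congr 1
      conv_lhs => rw [← List.take_append_drop (j - 1) t]
      rw [List.filter_append, htk1, List.nil_append, hdrop,
        List.filter_cons_of_pos (p := fun x => decide (x ≤ k)) (a := w) hpw]
    rw [h3, hrt, hfilt, cyclicNext_eq _ List.mem_cons_self]
    rw [List.idxOf_cons_self]
    simp only [List.length_cons]
    rw [Nat.zero_add, Nat.mod_eq_of_lt (by omega)]
    rfl
  exact ⟨j, hj1, by rw [hrot j hjN, hrt, hFval, hwdef], by rw [hFval]; exact hjval, hmin⟩


lemma listOf_succ (a : InfCycle) (m : ℕ) :
    listOf a (m + 4) = (listOf a (m + 3)).insertIdx ((a m).val + 1) (m + 4) := rfl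

lemma listOf_length (a : InfCycle) (m : ℕ) : (listOf a (m + 3)).length = m + 3 := by
  induction m with
  | zero => rfl
  | succ p ih =>
    rw [show p + 1 + 3 = p + 4 from rfl, listOf_succ,
      List.length_insertIdx_of_le_length (by rw [ih]; have := (a p).isLt; omega), ih]

lemma listOf_mem_le (a : InfCycle) (m : ℕ) {x : ℕ} (hx : x ∈ listOf a (m + 3)) :
    1 ≤ x ∧ x ≤ m + 3 := by
  induction m generalizing x with
  | zero => simp [listOf] at hx; omega
  | succ p ih =>
    rw [show p + 1 + 3 = p + 4 from rfl, listOf_succ] at hx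
    rcases (List.mem_insertIdx (by rw [listOf_length]; have := (a p).isLt; omega)).1 hx with
      h | h
    · omega
    · have := ih h; omega

lemma mem_listOf (a : InfCycle) (m k : ℕ) (h1 : 1 ≤ k) (h2 : k ≤ m + 3) :
    k ∈ listOf a (m + 3) := by
  induction m with
  | zero => interval_cases k <;> simp [listOf]
  | succ p ih =>
    rw [show p + 1 + 3 = p + 4 from rfl, listOf_succ]
    rw [List.mem_insertIdx (by rw [listOf_length]; have := (a p).isLt; omega)]
    rcases Nat.lt_or_ge k (p + 4) with h | h
    · exact Or.inr (ih (by omega))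
    · exact Or.inl (by omega)

lemma my_perm_insertIdx {α : Type*} (x : α) :
    ∀ (n : ℕ) (l : List α), n ≤ l.length → (l.insertIdx n x).Perm (x :: l)
  | 0, l, _ => by simp [List.insertIdx_zero]
  | n + 1, [], h => by simp at h
  | n + 1, a :: l, h => by
    rw [List.insertIdx_succ_cons]
    exact ((my_perm_insertIdx x n l (by simpa using h)).cons a).trans (List.Perm.swap x a l)

lemma listOf_nodup (a : InfCycle) (m : ℕ) : (listOf a (m + 3)).Nodup := by
  induction m with
  | zero => exact (by decide : ([1, 2, 3] : List ℕ).Nodup)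
  | succ p ih =>
    rw [show p + 1 + 3 = p + 4 from rfl, listOf_succ]
    refine ((my_perm_insertIdx _ _ _ ?_).nodup_iff).2 (List.nodup_cons.2 ⟨fun h => ?_, ih⟩)
    · rw [listOf_length]; have := (a p).isLt; omega
    · have := listOf_mem_le a p h; omega

lemma filter_insertIdx {α : Type*} (p : α → Bool) (x : α) (hpx : p x = false) :
    ∀ (n : ℕ) (l : List α), n ≤ l.length → (l.insertIdx n x).filter p = l.filter p
  | 0, l, _ => by simp [List.insertIdx_zero, List.filter_cons, hpx]
  | n + 1, [], h => by simp at h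
  | n + 1, a :: l, h => by
    rw [List.insertIdx_succ_cons, List.filter_cons, List.filter_cons,
      filter_insertIdx p x hpx n l (by simpa using h)]

lemma filter_listOf (a : InfCycle) (m d : ℕ) :
    (listOf a (m + 3 + d)).filter (fun x => decide (x ≤ m + 3)) = listOf a (m + 3) := by
  induction d with
  | zero =>
    refine List.filter_eq_self.2 fun x hx => ?_
    have := listOf_mem_le a m hx
    simp only [decide_eq_true_eq]
    omega
  | succ d ih =>
    rw [show m + 3 + (d + 1) = (m + d) + 4 from by omega, listOf_succ,
      filter_insertIdx _ _ (by simp only [decide_eq_false_iff_not]; omega) _ _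
        (by rw [listOf_length]; have := (a (m + d)).isLt; omega),
      show m + d + 3 = m + 3 + d from by omega, ih]

lemma filter2_listOf (a : InfCycle) (d : ℕ) :
    (listOf a (3 + d)).filter (fun x => decide (x ≤ 2)) = [1, 2] := by
  induction d with
  | zero => exact (by decide : List.filter (fun x => decide (x ≤ 2)) [1, 2, 3] = [1, 2])
  | succ d ih =>
    rw [show 3 + (d + 1) = d + 4 from by omega, listOf_succ,
      filter_insertIdx _ _ (by simp only [decide_eq_false_iff_not]; omega) _ _
        (by rw [listOf_length]; have := (a d).isLt; omega),
      show d + 3 = 3 + d from by omega, ih]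

lemma iterate_prev_eq (l : List ℕ) (hl : l.Nodup) {k : ℕ} (hk : k ∈ l) (i : ℕ) :
    (cyclicPrev l)^[i] k = (cyclicNext l.reverse)^[i] k ∧ (cyclicNext l.reverse)^[i] k ∈ l := by
  induction i with
  | zero => exact ⟨rfl, hk⟩
  | succ i ih =>
    obtain ⟨h1, h2⟩ := ih
    refine ⟨?_, ?_⟩
    · rw [Function.iterate_succ_apply', Function.iterate_succ_apply', h1,
        cyclicPrev_eq_reverse l hl h2]
    · rw [Function.iterate_succ_apply']
      exact List.mem_reverse.1 (cyclicNext_mem l.reverse (List.mem_reverse.2 h2))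

/-- For 2 ≤ k ≤ n, `ν⁺_A(k)` is the first node smaller than `k`
encountered when walking along `A_n` from `k` in positive direction, and `ν⁻_A(k)` is the
first node smaller than `k` encountered when walking in negative direction. -/
theorem nu_via_walk (a : InfCycle) (k n : ℕ) (h2 : 2 ≤ k) (hkn : k ≤ n) (hn : 3 ≤ n) :
    (∃ j : ℕ, 1 ≤ j ∧ (cyclicNext (listOf a n))^[j] k = nuPlus a k ∧ nuPlus a k < k ∧
      ∀ i : ℕ, 1 ≤ i → i < j → k ≤ (cyclicNext (listOf a n))^[i] k) ∧
    (∃ j : ℕ, 1 ≤ j ∧ (cyclicPrev (listOf a n))^[j] k = nuMinus a k ∧ nuMinus a k < k ∧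
      ∀ i : ℕ, 1 ≤ i → i < j → k ≤ (cyclicPrev (listOf a n))^[i] k) := by
  obtain ⟨m, rfl⟩ : ∃ m, n = m + 3 := ⟨n - 3, by omega⟩
  have hnd : (listOf a (m + 3)).Nodup := listOf_nodup a m
  have hkl : k ∈ listOf a (m + 3) := mem_listOf a m k (by omega) (by omega)
  have h1l : (1 : ℕ) ∈ listOf a (m + 3) := mem_listOf a m 1 (by omega) (by omega)
  have hF : cyclicNext ((listOf a (m + 3)).filter (fun x => decide (x ≤ k))) k = nuPlus a k ∧
      cyclicNext (((listOf a (m + 3)).filter (fun x => decide (x ≤ k))).reverse) k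
        = nuMinus a k := by
    rcases eq_or_lt_of_le h2 with h | h
    · subst h
      have hfil : (listOf a (m + 3)).filter (fun x => decide (x ≤ 2)) = [1, 2] := by
        have := filter2_listOf a m
        rwa [show 3 + m = m + 3 from by omega] at this
      rw [hfil]
      constructor
      · show cyclicNext [1, 2] 2 = nuPlus a 2
        unfold nuPlus
        rw [if_neg (by omega), if_pos rfl]
        rfl
      · show cyclicNext [2, 1] 2 = nuMinus a 2
        unfold nuMinus
        rw [if_neg (by omega), if_pos rfl]
        rfl
    · have hfil : (listOf a (m + 3)).filter (fun x => decide (x ≤ k)) = listOf a k := by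
        have := filter_listOf a (k - 3) (m + 3 - k)
        rwa [show k - 3 + 3 = k from by omega, show k + (m + 3 - k) = m + 3 from by omega] at this
      have hndk : (listOf a k).Nodup := by
        have := listOf_nodup a (k - 3)
        rwa [show k - 3 + 3 = k from by omega] at this
      have hmk : k ∈ listOf a k := by
        have := mem_listOf a (k - 3) k (by omega) (by omega)
        rwa [show k - 3 + 3 = k from by omega] at this
      rw [hfil]
      constructor
      · unfold nuPlus
        rw [if_neg (by omega), if_neg (by omega)]
      · rw [← cyclicPrev_eq_reverse (listOf a k) hndk hmk]
        unfold nuMinus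
        rw [if_neg (by omega), if_neg (by omega)]
  obtain ⟨j, hj1, hjeq, hjlt, hjmin⟩ := core (listOf a (m + 3)) hnd hkl h1l (by omega)
  obtain ⟨j', hj1', hjeq', hjlt', hjmin'⟩ := core (listOf a (m + 3)).reverse
    (List.nodup_reverse.2 hnd) (List.mem_reverse.2 hkl) (List.mem_reverse.2 h1l) (by omega)
  rw [List.filter_reverse] at hjeq' hjlt'
  refine ⟨⟨j, hj1, ?_, ?_, hjmin⟩, ⟨j', hj1', ?_, ?_, ?_⟩⟩
  · rw [hjeq, hF.1]
  · rw [← hF.1]; exact hjlt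
  · rw [(iterate_prev_eq _ hnd hkl j').1, hjeq', hF.2]
  · rw [← hF.2]; exact hjlt'
  · intro i hi1 hi2
    rw [(iterate_prev_eq _ hnd hkl i).1]
    exact hjmin' i hi1 hi2
end
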